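/- arXiv:2412.14336 — 3 statements merged into one kernel-verified Lean document; each statement's English description precedes it below -/
import Mathlib

section
/- Let (M,τ) be a tracial von Neumann algebra generated by a von Neumann subalgebra B and a tuple of self-adjoint operators x=(x_i)_{i∈I}. Then x admits a (ℂ, (δ_{ij}τ)_{i,j∈I})-conjugate system if and only if the tuple x⊗1 admits a (ℂ⊗B, (δ_{ij} τ⊗1_B)_{i,j∈I})-conjugate system. -/
/- Common framework: tracial von Neumann algebras, conditional expectations,
covariance matrices, the correspondence `L²(M ⊠_η M, τ)`, the η-partial
derivative, (B,η)-conjugate systems, Popa intertwining and operator-valued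
cumulants, following the paper
"Conjugate systems relative to covariance matrices". -/

open scoped InnerProductSpace ComplexOrder

noncomputable section

variable {H : Type} [NormedAddCommGroup H] [InnerProductSpace ℂ H] [CompleteSpace H]

/-- The von Neumann algebra generated by a (star-closed) set of operators:
its double commutant. -/
def vnGen (s : Set (H →L[ℂ] H)) : Set (H →L[ℂ] H) :=
  Set.centralizer (Set.centralizer s)

/-- The center of a set of operators. -/
def centerOf (s : Set (H →L[ℂ] H)) : Set (H →L[ℂ] H) :=
  s ∩ Set.centralizer s

/-- The relative commutant `s' ∩ amb`. -/
def relComm (amb s : Set (H →L[ℂ] H)) : Set (H →L[ℂ] H) :=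
  {y ∈ amb | ∀ b ∈ s, b * y = y * b}

/-- A von Neumann algebra `M ⊆ B(H)` together with a faithful (normal) tracial state `τ`
(extended arbitrarily to all of `B(H)`). -/
structure TracialVN (H : Type) [NormedAddCommGroup H] [InnerProductSpace ℂ H]
    [CompleteSpace H] where
  M : VonNeumannAlgebra H
  τ : (H →L[ℂ] H) →ₗ[ℂ] ℂ
  τ_one : τ 1 = 1
  τ_star : ∀ a ∈ M, τ (star a) = starRingEnd ℂ (τ a)
  τ_trace : ∀ a ∈ M, ∀ b ∈ M, τ (a * b) = τ (b * a)
  τ_pos : ∀ a ∈ M, 0 ≤ τ (star a * a)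
  τ_faithful : ∀ a ∈ M, τ (star a * a) = 0 → a = 0

/-- The `τ`-norm `‖a‖_τ = τ(a^*a)^{1/2}` of an operator. -/
def TracialVN.τNorm (V : TracialVN H) (a : H →L[ℂ] H) : ℝ :=
  Real.sqrt (V.τ (star a * a)).re

/-- The (unique) `τ`-preserving faithful normal conditional expectation of `M` onto the
subalgebra with carrier set `Bs` (defined on all of `B(H)`; the relevant properties
hold on `M`). -/
structure CondExpOn (V : TracialVN H) (Bs : Set (H →L[ℂ] H)) where
  E : (H →L[ℂ] H) →ₗ[ℂ] (H →L[ℂ] H)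
  mem : ∀ a ∈ V.M, E a ∈ Bs
  fix : ∀ b ∈ Bs, E b = b
  bimod : ∀ b₁ ∈ Bs, ∀ b₂ ∈ Bs, ∀ a ∈ V.M, E (b₁ * a * b₂) = b₁ * E a * b₂
  star_map : ∀ a ∈ V.M, E (star a) = star (E a)
  pres : ∀ a ∈ V.M, V.τ (E a) = V.τ a
  faithful : ∀ a ∈ V.M, E (star a * a) = 0 → a = 0

/-- `η = (η_{ij})_{i,j∈I}` is a covariance matrix over `B` (carrier set `Bs`):
each `η_{ij}` maps `B` to `B`, `η` is `τ`-symmetric, and `η` is (completely) positive in the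
sense that the kernel associated to the extension `η ∘ E_B` of `η` to `M` is positive. -/
def IsCovariance {I : Type} (V : TracialVN H) (Bs : Set (H →L[ℂ] H))
    (EB : CondExpOn V Bs) (η : I → I → (H →L[ℂ] H) →ₗ[ℂ] (H →L[ℂ] H)) : Prop :=
  (∀ i j, ∀ b ∈ Bs, η i j b ∈ Bs) ∧
  (∀ i j, ∀ a ∈ Bs, ∀ b ∈ Bs, V.τ (η i j a * b) = V.τ (a * η j i b)) ∧
  (∀ (n : ℕ) (ks : Fin n → I) (as bs : Fin n → (H →L[ℂ] H)),
    (∀ m, as m ∈ V.M) → (∀ m, bs m ∈ Bs) →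
    0 ≤ V.τ (∑ m, ∑ m', star (bs m) * η (ks m) (ks m') (EB.E (star (as m) * as m')) * bs m'))

/-- The GNS Hilbert space `L²(M,τ)`: a complex Hilbert space `L` together with the dense
embedding `ι : M → L` satisfying `⟪ι a, ι b⟫ = τ(a^* b)`, and with the normal left and right
actions of `M`. -/
structure L2Rep (V : TracialVN H) (L : Type) [NormedAddCommGroup L]
    [InnerProductSpace ℂ L] [CompleteSpace L] where
  ι : (H →L[ℂ] H) →ₗ[ℂ] L
  inner_eq : ∀ a ∈ V.M, ∀ b ∈ V.M, ⟪ι a, ι b⟫_ℂ = V.τ (star a * b)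
  dense_image : Dense (ι '' (V.M : Set (H →L[ℂ] H)))
  /-- the left action of `M` on `L²(M,τ)` -/
  al : (H →L[ℂ] H) →ₗ[ℂ] L →ₗ[ℂ] L
  /-- the right action of `M` on `L²(M,τ)`: `ar a ζ = ζ · a` -/
  ar : (H →L[ℂ] H) →ₗ[ℂ] L →ₗ[ℂ] L
  al_ι : ∀ a ∈ V.M, ∀ b ∈ V.M, al a (ι b) = ι (a * b)
  ar_ι : ∀ a ∈ V.M, ∀ b ∈ V.M, ar a (ι b) = ι (b * a)
  al_mul : ∀ a b : H →L[ℂ] H, al (a * b) = al a ∘ₗ al b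
  ar_mul : ∀ a b : H →L[ℂ] H, ar (a * b) = ar b ∘ₗ ar a
  al_ar : ∀ (a b : H →L[ℂ] H) (ζ : L), al a (ar b ζ) = ar b (al a ζ)
  al_one : al 1 = LinearMap.id
  ar_one : ar 1 = LinearMap.id
  al_bound : ∀ a ∈ V.M, ∀ ζ : L, ‖al a ζ‖ ≤ ‖a‖ * ‖ζ‖
  ar_bound : ∀ a ∈ V.M, ∀ ζ : L, ‖ar a ζ‖ ≤ ‖a‖ * ‖ζ‖

/-- The correspondence `L²(M ⊠_η M, τ)` over `M` determined by a covariance matrix `η`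
(extended to `M` as `η ∘ E_B`, which is encoded in the inner product formula below):
a Hilbert space `K` with distinguished vectors `e i`, normal left and right `M`-actions
`kl`, `kr`, densely spanned by `{a · e i · b : a, b ∈ M, i ∈ I}`, and with
`⟪a e_i b, c e_j d⟫ = τ(b^* η_{ij}(E_B(a^* c)) d)`. -/
structure EtaCorr (V : TracialVN H) (I : Type)
    (E : (H →L[ℂ] H) →ₗ[ℂ] (H →L[ℂ] H))
    (η : I → I → (H →L[ℂ] H) →ₗ[ℂ] (H →L[ℂ] H))
    (K : Type) [NormedAddCommGroup K] [InnerProductSpace ℂ K] [CompleteSpace K] where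
  e : I → K
  kl : (H →L[ℂ] H) →ₗ[ℂ] K →ₗ[ℂ] K
  kr : (H →L[ℂ] H) →ₗ[ℂ] K →ₗ[ℂ] K
  kl_mul : ∀ a b : H →L[ℂ] H, kl (a * b) = kl a ∘ₗ kl b
  kr_mul : ∀ a b : H →L[ℂ] H, kr (a * b) = kr b ∘ₗ kr a
  kl_kr : ∀ (a b : H →L[ℂ] H) (ζ : K), kl a (kr b ζ) = kr b (kl a ζ)
  kl_one : kl 1 = LinearMap.id
  kr_one : kr 1 = LinearMap.id
  inner_gen : ∀ (i j : I), ∀ a ∈ V.M, ∀ b ∈ V.M, ∀ c ∈ V.M, ∀ d ∈ V.M,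
    ⟪kl a (kr b (e i)), kl c (kr d (e j))⟫_ℂ = V.τ (star b * η i j (E (star a * c)) * d)
  dense_span : Dense ((Submodule.span ℂ
      {ζ : K | ∃ (i : I) (a b : H →L[ℂ] H), a ∈ V.M ∧ b ∈ V.M ∧ ζ = kl a (kr b (e i))} :
      Submodule ℂ K) : Set K)
  kl_bound : ∀ a ∈ V.M, ∀ ζ : K, ‖kl a ζ‖ ≤ ‖a‖ * ‖ζ‖
  kr_bound : ∀ a ∈ V.M, ∀ ζ : K, ‖kr a ζ‖ ≤ ‖a‖ * ‖ζ‖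

variable {I : Type}

/-- The element `a · e i · b` of the correspondence. -/
def EtaCorr.gen {V : TracialVN H} {E : (H →L[ℂ] H) →ₗ[ℂ] (H →L[ℂ] H)}
    {η : I → I → (H →L[ℂ] H) →ₗ[ℂ] (H →L[ℂ] H)} {K : Type} [NormedAddCommGroup K]
    [InnerProductSpace ℂ K] [CompleteSpace K] (C : EtaCorr V I E η K)
    (a : H →L[ℂ] H) (i : I) (b : H →L[ℂ] H) : K :=
  C.kl a (C.kr b (C.e i))

/-- The *-algebra `coef⟨x⟩` of noncommutative polynomials in the tuple `x` with coefficients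
in `coef`. -/
def polyAlg (coef : Set (H →L[ℂ] H)) (x : I → (H →L[ℂ] H)) :
    Subalgebra ℂ (H →L[ℂ] H) :=
  Algebra.adjoin ℂ (coef ∪ Set.range x)

/-- The `η`-partial derivative: the derivation `∂_η : coef⟨x⟩ → L²(M ⊠_η M, τ)` with
`∂_η(x i) = e i`, `∂_η(b) = 0` for `b` in the coefficient algebra, and the Leibniz rule. -/
structure EtaDer {V : TracialVN H} {E : (H →L[ℂ] H) →ₗ[ℂ] (H →L[ℂ] H)}
    {η : I → I → (H →L[ℂ] H) →ₗ[ℂ] (H →L[ℂ] H)} {K : Type} [NormedAddCommGroup K]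
    [InnerProductSpace ℂ K] [CompleteSpace K] (C : EtaCorr V I E η K)
    (coef : Set (H →L[ℂ] H)) (x : I → (H →L[ℂ] H)) where
  D : (H →L[ℂ] H) →ₗ[ℂ] K
  D_x : ∀ i, D (x i) = C.e i
  D_coef : ∀ b ∈ coef, D b = 0
  D_leibniz : ∀ p ∈ polyAlg coef x, ∀ q ∈ polyAlg coef x,
    D (p * q) = C.kr q (D p) + C.kl p (D q)

/-- `(ξ i)_{i ∈ I}` is a `(B,η)`-conjugate system for the tuple `x`:
`⟪ξ i, p⟫_τ = ⟪e i, ∂_η p⟫` for every `p ∈ coef⟨x⟩`. -/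
def IsConjugateSystem {V : TracialVN H}
    {E : (H →L[ℂ] H) →ₗ[ℂ] (H →L[ℂ] H)}
    {η : I → I → (H →L[ℂ] H) →ₗ[ℂ] (H →L[ℂ] H)} {L K : Type}
    [NormedAddCommGroup L] [InnerProductSpace ℂ L] [CompleteSpace L]
    [NormedAddCommGroup K] [InnerProductSpace ℂ K] [CompleteSpace K]
    (L2 : L2Rep V L) (C : EtaCorr V I E η K) {coef : Set (H →L[ℂ] H)}
    {x : I → (H →L[ℂ] H)} (Der : EtaDer C coef x) (ξ : I → L) : Prop :=
  ∀ i, ∀ p ∈ polyAlg coef x, ⟪ξ i, L2.ι p⟫_ℂ = ⟪C.e i, Der.D p⟫_ℂ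

/-- Popa intertwining: "a corner of `Asub` embeds into `B` inside `amb`"
(`Asub ≺_amb B`), where `B` is the image of the trace-preserving conditional
expectation `E`.  It is expressed through the equivalent characterization of
Popa's intertwining theorem: there is NO net of unitaries `(u_k)` in `Asub`
with `‖E_B(x u_k y)‖_τ → 0` for all `x, y ∈ amb`. -/
def PopaEmbeds (V : TracialVN H) (amb Asub : Set (H →L[ℂ] H))
    (E : (H →L[ℂ] H) →ₗ[ℂ] (H →L[ℂ] H)) : Prop :=
  ¬ ∃ (ιT : Type) (l : Filter ιT), l.NeBot ∧ ∃ u : ιT → (H →L[ℂ] H),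
      (∀ k, u k ∈ Asub ∧ star (u k) * u k = 1 ∧ u k * star (u k) = 1) ∧
      (∀ x ∈ amb, ∀ y ∈ amb,
        Filter.Tendsto (fun k => V.τNorm (E (x * u k * y))) l (nhds 0))

/-- The normalizer `N_amb(Bs)` of `Bs` inside `amb`. -/
def normalizerSet (amb Bs : Set (H →L[ℂ] H)) : Set (H →L[ℂ] H) :=
  {u | u ∈ amb ∧ star u * u = 1 ∧ u * star u = 1 ∧ (fun b => u * b * star u) '' Bs = Bs}

/-- The ordered product `∏_{j ∈ s} a j` (in increasing order of indices). -/
def ordProd {n : ℕ} (s : Finset (Fin n)) (a : Fin n → (H →L[ℂ] H)) : (H →L[ℂ] H) :=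
  ((s.sort (· ≤ ·)).map a).prod

/-- The increasing enumeration of a finite set of indices. -/
def blockEnum {n : ℕ} (W : Finset (Fin n)) : Fin W.card → Fin n :=
  fun k => ↑(W.orderIsoOfFin rfl k)

/-- The "gap" after `v`: the indices greater than `v` and smaller than every element
of `W` that is greater than `v`. -/
def gapSet {n : ℕ} (W : Finset (Fin n)) (v : Fin n) : Finset (Fin n) :=
  Finset.univ.filter (fun j => v < j ∧ ∀ m ∈ W, m ≤ v ∨ j < m)

/-- `κ` is the sequence of `B`-valued cumulant functions associated to the conditional
expectation `E`, defined through the moment–cumulant formula over noncrossing partitions.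
The formula below is the standard equivalent recursion obtained by summing over the block
`W = {v_1 < … < v_s}` of the noncrossing partition containing the first letter, with the
moments of the intervening intervals absorbed into the arguments by multiplicativity:
`E(a_1 ⋯ a_{n+1}) = Σ_W κ^{(|W|)}(a_{v_1}·E(gap_1) ⊗ ⋯ ⊗ a_{v_s}·E(gap_s))`. -/
def IsCumulantSeq (V : TracialVN H) (E : (H →L[ℂ] H) →ₗ[ℂ] (H →L[ℂ] H))
    (κ : (n : ℕ) → (Fin n → (H →L[ℂ] H)) → (H →L[ℂ] H)) : Prop :=
  ∀ (n : ℕ) (a : Fin (n + 1) → (H →L[ℂ] H)), (∀ m, a m ∈ V.M) →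
    E (ordProd Finset.univ a) =
      ∑ W ∈ Finset.univ.powerset.filter (fun W : Finset (Fin (n + 1)) => (0 : Fin (n + 1)) ∈ W),
        κ W.card (fun k => a (blockEnum W k) * E (ordProd (gapSet W (blockEnum W k)) a))

end

/-! ## Statement 7
`x` admits a `(ℂ, (δ_{ij}τ))`-conjugate system iff the tuple `x ⊗ 1` admits a
`(ℂ ⊗ B, (δ_{ij} τ ⊗ 1_B))`-conjugate system. -/

open scoped InnerProductSpace ComplexOrder

noncomputable section


/-! ### Auxiliary material for the proof of Statement 7 -/

section Aux

open scoped InnerProductSpace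

/-- Transfer of limits along two inner-product-compatible linear maps. -/
lemma seq_transfer {M₀ F G : Type*} [AddCommGroup M₀] [Module ℂ M₀]
    [NormedAddCommGroup F] [InnerProductSpace ℂ F]
    [NormedAddCommGroup G] [InnerProductSpace ℂ G] [CompleteSpace G]
    (g : M₀ →ₗ[ℂ] F) (h : M₀ →ₗ[ℂ] G)
    (hIP : ∀ a b : M₀, ⟪h a, h b⟫_ℂ = ⟪g a, g b⟫_ℂ)
    {v : F} (hv : v ∈ closure (Set.range g)) :
    ∃ (w : G) (a : ℕ → M₀),
      Filter.Tendsto (fun n => g (a n)) Filter.atTop (nhds v) ∧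
      Filter.Tendsto (fun n => h (a n)) Filter.atTop (nhds w) := by
  obtain ⟨u, hu, hulim⟩ := mem_closure_iff_seq_limit.mp hv
  choose a ha using hu
  have hnorm : ∀ m : M₀, ‖h m‖ = ‖g m‖ := by
    intro m
    have h1 : ((‖h m‖ : ℂ)) ^ 2 = ((‖g m‖ : ℂ)) ^ 2 :=
      (inner_self_eq_norm_sq_to_K (𝕜 := ℂ) (h m)).symm.trans
        ((hIP m m).trans (inner_self_eq_norm_sq_to_K (𝕜 := ℂ) (g m)))
    have h2 : (‖h m‖ : ℝ) ^ 2 = (‖g m‖ : ℝ) ^ 2 := by exact_mod_cast h1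
    nlinarith [norm_nonneg (h m), norm_nonneg (g m)]
  have hglim : Filter.Tendsto (fun n => g (a n)) Filter.atTop (nhds v) := by
    simpa only [ha] using hulim
  have hgc : CauchySeq (fun n => g (a n)) := hglim.cauchySeq
  have hdist : ∀ n m : ℕ, dist (h (a n)) (h (a m)) = dist (g (a n)) (g (a m)) := by
    intro n m
    rw [dist_eq_norm, dist_eq_norm, ← map_sub, ← map_sub, hnorm]
  have hhc : CauchySeq (fun n => h (a n)) := by
    rw [Metric.cauchySeq_iff] at hgc ⊢
    intro ε hε
    obtain ⟨N, hN⟩ := hgc ε hε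
    exact ⟨N, fun n hn m hm => by rw [hdist]; exact hN n hn m hm⟩
  obtain ⟨w, hw⟩ := cauchySeq_tendsto_of_complete hhc
  exact ⟨w, a, hglim, hw⟩

variable {H : Type} [NormedAddCommGroup H] [InnerProductSpace ℂ H] [CompleteSpace H]

/-- The word (ordered product) determined by a list of indices. -/
def wordOf {I : Type} (x : I → (H →L[ℂ] H)) (w : List I) : H →L[ℂ] H :=
  (w.map x).prod

@[simp] lemma wordOf_nil {I : Type} (x : I → (H →L[ℂ] H)) : wordOf x ([] : List I) = 1 := rfl

@[simp] lemma wordOf_cons {I : Type} (x : I → (H →L[ℂ] H)) (j : I) (t : List I) :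
    wordOf x (j :: t) = x j * wordOf x t := by simp [wordOf]

lemma wordOf_append {I : Type} (x : I → (H →L[ℂ] H)) (w w' : List I) :
    wordOf x (w ++ w') = wordOf x w * wordOf x w' := by simp [wordOf]

lemma vn_smul_mem (S : VonNeumannAlgebra H) (c : ℂ) {a : H →L[ℂ] H} (ha : a ∈ S) :
    c • a ∈ S := by
  have h1 : (c • (1 : H →L[ℂ] H)) ∈ S := by
    have h2 : algebraMap ℂ (H →L[ℂ] H) c ∈ S.toStarSubalgebra :=
      S.toStarSubalgebra.algebraMap_mem c
    rwa [Algebra.algebraMap_eq_smul_one] at h2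
  have h3 := mul_mem h1 ha
  rwa [smul_mul_assoc, one_mul] at h3

/-- A linear map out of a submodule from a function that is additive/homogeneous on it. -/
def restrictLin {A A₃ : Type*} [AddCommGroup A] [Module ℂ A] [AddCommGroup A₃] [Module ℂ A₃]
    (S : Submodule ℂ A) (f : A → A₃)
    (hadd : ∀ a ∈ S, ∀ b ∈ S, f (a + b) = f a + f b)
    (hsmul : ∀ (c : ℂ), ∀ a ∈ S, f (c • a) = c • f a) : S →ₗ[ℂ] A₃ where
  toFun a := f a
  map_add' a b := by
    show f (↑a + ↑b) = f ↑a + f ↑b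
    exact hadd _ a.2 _ b.2
  map_smul' c a := by
    show f (c • (a : A)) = c • f ↑a
    exact hsmul c _ a.2

@[simp] lemma restrictLin_apply {A A₃ : Type*} [AddCommGroup A] [Module ℂ A] [AddCommGroup A₃]
    [Module ℂ A₃] (S : Submodule ℂ A) (f : A → A₃) (hadd) (hsmul) (a : S) :
    restrictLin S f hadd hsmul a = f a := rfl

end Aux


set_option maxHeartbeats 1600000 in
theorem statement7
    {H H₃ : Type}
    [NormedAddCommGroup H] [InnerProductSpace ℂ H] [CompleteSpace H]
    [NormedAddCommGroup H₃] [InnerProductSpace ℂ H₃] [CompleteSpace H₃]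
    {I : Type} [Countable I]
    -- `(M, τ)` generated by `B` and the self-adjoint tuple `x` :
    (V : TracialVN H) (B : VonNeumannAlgebra H)
    (hBM : (B : Set (H →L[ℂ] H)) ⊆ (V.M : Set (H →L[ℂ] H)))
    (x : I → (H →L[ℂ] H)) (hxM : ∀ i, x i ∈ V.M) (hxsa : ∀ i, IsSelfAdjoint (x i))
    (hgen : (V.M : Set (H →L[ℂ] H)) = vnGen ((B : Set (H →L[ℂ] H)) ∪ Set.range x))
    -- the scalar covariance matrix `(δ_{ij} τ)_{i,j}` over `ℂ·1`, whose extension to `M`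
    -- is `(δ_{ij} τ(·)1)`; `L²(M ⊠ M)` and `∂` for it :
    (ηs : I → I → (H →L[ℂ] H) →ₗ[ℂ] (H →L[ℂ] H))
    (hηs_diag : ∀ i, ηs i i = V.τ.smulRight 1)
    (hηs_off : ∀ i j, i ≠ j → ηs i j = 0)
    {L Ks : Type} [NormedAddCommGroup L] [InnerProductSpace ℂ L] [CompleteSpace L]
    [NormedAddCommGroup Ks] [InnerProductSpace ℂ Ks] [CompleteSpace Ks]
    (L2 : L2Rep V L) (Cs : EtaCorr V I (V.τ.smulRight 1) ηs Ks)
    (Ders : EtaDer Cs (Set.range (fun c : ℂ => c • (1 : H →L[ℂ] H))) x)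
    -- the von Neumann tensor product `M ⊗̄ B` with trace `τ ⊗ τ|_B` and the two
    -- commuting embeddings `jM`, `jB` :
    (V₃ : TracialVN H₃)
    (jM jB : (H →L[ℂ] H) → (H₃ →L[ℂ] H₃))
    (hjM_mem : ∀ a ∈ V.M, jM a ∈ V₃.M)
    (hjM_add : ∀ a ∈ V.M, ∀ b ∈ V.M, jM (a + b) = jM a + jM b)
    (hjM_smul : ∀ (c : ℂ), ∀ a ∈ V.M, jM (c • a) = c • jM a)
    (hjM_mul : ∀ a ∈ V.M, ∀ b ∈ V.M, jM (a * b) = jM a * jM b)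
    (hjM_star : ∀ a ∈ V.M, jM (star a) = star (jM a))
    (hjM_one : jM 1 = 1)
    (hjB_mem : ∀ b ∈ B, jB b ∈ V₃.M)
    (hjB_add : ∀ a ∈ B, ∀ b ∈ B, jB (a + b) = jB a + jB b)
    (hjB_smul : ∀ (c : ℂ), ∀ b ∈ B, jB (c • b) = c • jB b)
    (hjB_mul : ∀ a ∈ B, ∀ b ∈ B, jB (a * b) = jB a * jB b)
    (hjB_star : ∀ b ∈ B, jB (star b) = star (jB b))
    (hjB_one : jB 1 = 1)
    (hcomm : ∀ a ∈ V.M, ∀ b ∈ B, jM a * jB b = jB b * jM a)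
    (hgen₃ : (V₃.M : Set (H₃ →L[ℂ] H₃)) =
      vnGen (jM '' (V.M : Set (H →L[ℂ] H)) ∪ jB '' (B : Set (H →L[ℂ] H))))
    (htrace₃ : ∀ a ∈ V.M, ∀ b ∈ B, V₃.τ (jM a * jB b) = V.τ a * V.τ b)
    -- the coefficient subalgebra `ℂ ⊗ B = 1 ⊗ B` :
    (B₃ : VonNeumannAlgebra H₃)
    (hB₃ : (B₃ : Set (H₃ →L[ℂ] H₃)) = vnGen (jB '' (B : Set (H →L[ℂ] H))))
    -- the conditional expectation `τ ⊗ 1_B` onto `ℂ ⊗ B` :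
    (E₃ : CondExpOn V₃ (B₃ : Set (H₃ →L[ℂ] H₃)))
    (hE₃ : ∀ a ∈ V.M, ∀ b ∈ B, E₃.E (jM a * jB b) = V.τ a • jB b)
    -- the covariance matrix `(δ_{ij} τ ⊗ 1_B)_{i,j}`, extended to `M ⊗̄ B`
    -- as `(δ_{ij} (τ ⊗ 1_B))` :
    (η₃ : I → I → (H₃ →L[ℂ] H₃) →ₗ[ℂ] (H₃ →L[ℂ] H₃))
    (hcov₃ : IsCovariance V₃ (B₃ : Set (H₃ →L[ℂ] H₃)) E₃ η₃)
    (hη₃_diag : ∀ i, η₃ i i = E₃.E)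
    (hη₃_off : ∀ i j, i ≠ j → η₃ i j = 0)
    {L₃ K₃ : Type} [NormedAddCommGroup L₃] [InnerProductSpace ℂ L₃] [CompleteSpace L₃]
    [NormedAddCommGroup K₃] [InnerProductSpace ℂ K₃] [CompleteSpace K₃]
    (L2₃ : L2Rep V₃ L₃) (C₃ : EtaCorr V₃ I E₃.E η₃ K₃)
    -- the derivation for the tuple `x ⊗ 1 = (jM (x i))` over `ℂ ⊗ B` :
    (Der₃ : EtaDer C₃ (B₃ : Set (H₃ →L[ℂ] H₃)) (fun i => jM (x i))) :
    (∃ ξ : I → L, IsConjugateSystem L2 Cs Ders ξ) ↔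
      (∃ ζ : I → L₃, IsConjugateSystem L2₃ C₃ Der₃ ζ) := by
  classical
  -- basic membership facts
  have h1B₃ : (1 : H₃ →L[ℂ] H₃) ∈ B₃ := by
    rw [← SetLike.mem_coe, hB₃]
    exact Set.one_mem_centralizer
  have hB₃M : ∀ b ∈ B₃, b ∈ V₃.M := by
    intro b hb
    have h1 : (B₃ : Set (H₃ →L[ℂ] H₃)) ⊆ (V₃.M : Set (H₃ →L[ℂ] H₃)) := by
      rw [hB₃, hgen₃]
      exact Set.centralizer_subset (Set.centralizer_subset Set.subset_union_right)
    exact h1 hb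
  have hB₃comm : ∀ b ∈ B₃, ∀ a ∈ V.M, jM a * b = b * jM a := by
    intro b hb a ha
    have hb' : b ∈ (B₃ : Set (H₃ →L[ℂ] H₃)) := hb
    rw [hB₃] at hb'
    have hjMa : jM a ∈ Set.centralizer (jB '' (B : Set (H →L[ℂ] H))) := by
      rintro m ⟨b₀, hb₀, rfl⟩
      exact (hcomm a ha b₀ hb₀).symm
    exact Set.mem_centralizer_iff.mp hb' (jM a) hjMa
  have hE₃jM : ∀ a ∈ V.M, E₃.E (jM a) = V.τ a • 1 := by
    intro a ha
    have h1 := hE₃ a ha 1 (one_mem B)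
    rwa [hjB_one, mul_one] at h1
  have FACT : ∀ a ∈ V.M, ∀ b ∈ B₃, V₃.τ (jM a * b) = V.τ a * V₃.τ b := by
    intro a ha b hb
    have hmem : jM a * b ∈ V₃.M := mul_mem (hjM_mem a ha) (hB₃M b hb)
    have h2 := E₃.bimod 1 h1B₃ b hb (jM a) (hjM_mem a ha)
    rw [one_mul, one_mul] at h2
    have h1 : E₃.E (jM a * b) = V.τ a • b := by
      rw [h2, hE₃jM a ha, smul_mul_assoc, one_mul]
    calc V₃.τ (jM a * b) = V₃.τ (E₃.E (jM a * b)) := (E₃.pres _ hmem).symm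
      _ = V.τ a * V₃.τ b := by rw [h1, map_smul, smul_eq_mul]
  -- words
  have hword_mem : ∀ w : List I, wordOf x w ∈ V.M := by
    intro w
    induction w with
    | nil => rw [wordOf_nil]; exact one_mem _
    | cons j t ih => rw [wordOf_cons]; exact mul_mem (hxM j) ih
  have hjM_word : ∀ w : List I, jM (wordOf x w) = wordOf (fun i => jM (x i)) w := by
    intro w
    induction w with
    | nil => rw [wordOf_nil, wordOf_nil]; exact hjM_one
    | cons j t ih => rw [wordOf_cons, wordOf_cons, hjM_mul _ (hxM j) _ (hword_mem t), ih]
  have hword₃_mem : ∀ w : List I, wordOf (fun i => jM (x i)) w ∈ V₃.M := by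
    intro w
    rw [← hjM_word w]
    exact hjM_mem _ (hword_mem w)
  have hA₃_words : ∀ w : List I,
      wordOf (fun i => jM (x i)) w ∈ polyAlg (↑B₃) (fun i => jM (x i)) := by
    intro w
    induction w with
    | nil => rw [wordOf_nil]; exact one_mem _
    | cons j t ih =>
      rw [wordOf_cons]
      exact mul_mem (Algebra.subset_adjoin (Or.inr ⟨j, rfl⟩)) ih
  have hAs_words : ∀ w : List I,
      wordOf x w ∈ polyAlg (Set.range (fun c : ℂ => c • (1 : H →L[ℂ] H))) x := by
    intro w
    induction w with
    | nil => rw [wordOf_nil]; exact one_mem _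
    | cons j t ih =>
      rw [wordOf_cons]
      exact mul_mem (Algebra.subset_adjoin (Or.inr ⟨j, rfl⟩)) ih
  have h1coef : (1 : H →L[ℂ] H) ∈ Set.range (fun c : ℂ => c • (1 : H →L[ℂ] H)) :=
    ⟨1, one_smul ℂ 1⟩
  have he₃ : ∀ i : I, C₃.e i = C₃.kl 1 (C₃.kr 1 (C₃.e i)) := by
    intro i
    rw [C₃.kl_one, C₃.kr_one]
    rfl
  have hes : ∀ i : I, Cs.e i = Cs.kl 1 (Cs.kr 1 (Cs.e i)) := by
    intro i
    rw [Cs.kl_one, Cs.kr_one]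
    rfl
  -- the key inner-product computation
  have TL : ∀ (i : I) (w : List I), ∀ c ∈ V.M, ∀ b ∈ B₃,
      ⟪C₃.e i, C₃.kl (jM c) (C₃.kr b (Der₃.D (wordOf (fun i => jM (x i)) w)))⟫_ℂ
        = ⟪Cs.e i, Cs.kl c (Ders.D (wordOf x w))⟫_ℂ * V₃.τ b := by
    intro i w
    induction w with
    | nil =>
      intro c hc b hb
      have h3 : Der₃.D (wordOf (fun i => jM (x i)) ([] : List I)) = 0 := by
        rw [wordOf_nil]; exact Der₃.D_coef 1 h1B₃
      have hs : Ders.D (wordOf x ([] : List I)) = 0 := by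
        rw [wordOf_nil]; exact Ders.D_coef 1 h1coef
      rw [h3, hs, map_zero, map_zero, map_zero, inner_zero_right, inner_zero_right, zero_mul]
    | cons j t ih =>
      intro c hc b hb
      have hxj₃ : jM (x j) ∈ polyAlg (↑B₃) (fun i => jM (x i)) :=
        Algebra.subset_adjoin (Or.inr ⟨j, rfl⟩)
      have hxjs : x j ∈ polyAlg (Set.range (fun c : ℂ => c • (1 : H →L[ℂ] H))) x :=
        Algebra.subset_adjoin (Or.inr ⟨j, rfl⟩)
      have hD₃ : Der₃.D (wordOf (fun i => jM (x i)) (j :: t))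
          = C₃.kr (wordOf (fun i => jM (x i)) t) (C₃.e j)
            + C₃.kl (jM (x j)) (Der₃.D (wordOf (fun i => jM (x i)) t)) := by
        rw [wordOf_cons, Der₃.D_leibniz _ hxj₃ _ (hA₃_words t)]
        have := Der₃.D_x j
        rw [this]
      have hDs : Ders.D (wordOf x (j :: t))
          = Cs.kr (wordOf x t) (Cs.e j) + Cs.kl (x j) (Ders.D (wordOf x t)) := by
        rw [wordOf_cons, Ders.D_leibniz _ hxjs _ (hAs_words t), Ders.D_x j]
      rw [hD₃, hDs, map_add, map_add, map_add, inner_add_right, inner_add_right, add_mul]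
      congr 1
      · -- first terms
        have hkr : C₃.kr b (C₃.kr (wordOf (fun i => jM (x i)) t) (C₃.e j))
            = C₃.kr (wordOf (fun i => jM (x i)) t * b) (C₃.e j) := by
          rw [C₃.kr_mul]; rfl
        rw [hkr]
        conv_lhs => rw [he₃ i]
        conv_rhs => rw [hes i]
        rw [C₃.inner_gen i j 1 (one_mem _) 1 (one_mem _) (jM c) (hjM_mem c hc)
            (wordOf (fun i => jM (x i)) t * b) (mul_mem (hword₃_mem t) (hB₃M b hb)),
          Cs.inner_gen i j 1 (one_mem _) 1 (one_mem _) c hc (wordOf x t) (hword_mem t)]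
        simp only [star_one, one_mul]
        by_cases hij : i = j
        · subst hij
          rw [hη₃_diag, hηs_diag, hE₃jM c hc]
          have hfix : E₃.E ((V.τ c) • (1 : H₃ →L[ℂ] H₃)) = (V.τ c) • 1 := by
            rw [map_smul, E₃.fix 1 h1B₃]
          have hssr : (V.τ.smulRight (1 : H →L[ℂ] H)) ((V.τ.smulRight 1) c)
              = (V.τ c) • 1 := by
            simp only [LinearMap.smulRight_apply, map_smul, smul_eq_mul, V.τ_one, mul_one,
              smul_smul, one_smul]
          rw [hfix, hssr, smul_mul_assoc, smul_mul_assoc, one_mul, one_mul, map_smul,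
            map_smul, smul_eq_mul, smul_eq_mul, ← hjM_word t, FACT _ (hword_mem t) b hb]
          ring
        · rw [hη₃_off i j hij, hηs_off i j hij]
          simp
      · -- second terms
        have hswap : C₃.kr b (C₃.kl (jM (x j)) (Der₃.D (wordOf (fun i => jM (x i)) t)))
            = C₃.kl (jM (x j)) (C₃.kr b (Der₃.D (wordOf (fun i => jM (x i)) t))) :=
          (C₃.kl_kr (jM (x j)) b _).symm
        rw [hswap]
        have hklm : C₃.kl (jM c) (C₃.kl (jM (x j))
              (C₃.kr b (Der₃.D (wordOf (fun i => jM (x i)) t))))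
            = C₃.kl (jM (c * x j)) (C₃.kr b (Der₃.D (wordOf (fun i => jM (x i)) t))) := by
          rw [hjM_mul c hc (x j) (hxM j), C₃.kl_mul]; rfl
        have hklms : Cs.kl c (Cs.kl (x j) (Ders.D (wordOf x t)))
            = Cs.kl (c * x j) (Ders.D (wordOf x t)) := by
          rw [Cs.kl_mul]; rfl
        rw [hklm, hklms]
        exact ih (c * x j) (mul_mem hc (hxM j)) b hb
  have CD : ∀ (i : I) (w : List I), ∀ b ∈ B₃,
      ⟪C₃.e i, Der₃.D (wordOf (fun i => jM (x i)) w * b)⟫_ℂ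
        = ⟪Cs.e i, Ders.D (wordOf x w)⟫_ℂ * V₃.τ b := by
    intro i w b hb
    have h0 : Der₃.D (wordOf (fun i => jM (x i)) w * b)
        = C₃.kr b (Der₃.D (wordOf (fun i => jM (x i)) w)) := by
      rw [Der₃.D_leibniz _ (hA₃_words w) b (Algebra.subset_adjoin (Or.inl hb)),
        Der₃.D_coef b hb, map_zero, add_zero]
    have h1 : C₃.kr b (Der₃.D (wordOf (fun i => jM (x i)) w))
        = C₃.kl (jM 1) (C₃.kr b (Der₃.D (wordOf (fun i => jM (x i)) w))) := by
      rw [hjM_one, C₃.kl_one]; rfl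
    rw [h0, h1, TL i w 1 (one_mem _) b hb]
    have h2 : Cs.kl 1 (Ders.D (wordOf x w)) = Ders.D (wordOf x w) := by
      rw [Cs.kl_one]; rfl
    rw [h2]
  -- span descriptions of the polynomial algebras
  have hmulW : ∀ p ∈ Submodule.span ℂ
        {p : H₃ →L[ℂ] H₃ | ∃ w b, b ∈ B₃ ∧ p = wordOf (fun i => jM (x i)) w * b},
      ∀ q ∈ Submodule.span ℂ
        {p : H₃ →L[ℂ] H₃ | ∃ w b, b ∈ B₃ ∧ p = wordOf (fun i => jM (x i)) w * b},
      p * q ∈ Submodule.span ℂ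
        {p : H₃ →L[ℂ] H₃ | ∃ w b, b ∈ B₃ ∧ p = wordOf (fun i => jM (x i)) w * b} := by
    intro p hp
    refine Submodule.span_induction ?_ ?_ ?_ ?_ hp
    · rintro p' ⟨w, b, hb, rfl⟩ q hq
      refine Submodule.span_induction ?_ ?_ ?_ ?_ hq
      · rintro q' ⟨w', b', hb', rfl⟩
        have hc : b * wordOf (fun i => jM (x i)) w' = wordOf (fun i => jM (x i)) w' * b := by
          rw [← hjM_word w']
          exact (hB₃comm b hb _ (hword_mem w')).symm
        have heq : (wordOf (fun i => jM (x i)) w * b) * (wordOf (fun i => jM (x i)) w' * b')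
            = wordOf (fun i => jM (x i)) (w ++ w') * (b * b') := by
          rw [wordOf_append, mul_assoc, ← mul_assoc b, hc, mul_assoc, ← mul_assoc,
            ← mul_assoc]
        rw [heq]
        exact Submodule.subset_span ⟨w ++ w', b * b', mul_mem hb hb', rfl⟩
      · rw [mul_zero]; exact zero_mem _
      · intro u v _ _ h1 h2; rw [mul_add]; exact add_mem h1 h2
      · intro c u _ h1; rw [mul_smul_comm]; exact Submodule.smul_mem _ _ h1
    · intro q hq; rw [zero_mul]; exact zero_mem _
    · intro u v _ _ h1 h2 q hq; rw [add_mul]; exact add_mem (h1 q hq) (h2 q hq)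
    · intro c u _ h1 q hq; rw [smul_mul_assoc]; exact Submodule.smul_mem _ _ (h1 q hq)
  have hA₃span : ∀ p ∈ polyAlg (↑B₃) (fun i => jM (x i)),
      p ∈ Submodule.span ℂ
        {p : H₃ →L[ℂ] H₃ | ∃ w b, b ∈ B₃ ∧ p = wordOf (fun i => jM (x i)) w * b} := by
    intro p hp
    refine Algebra.adjoin_induction ?_ ?_ ?_ ?_ hp
    · rintro q (hq | ⟨i, rfl⟩)
      · exact Submodule.subset_span ⟨[], q, hq, by rw [wordOf_nil, one_mul]⟩
      · exact Submodule.subset_span ⟨[i], 1, h1B₃, by rw [wordOf_cons, wordOf_nil, mul_one, mul_one]⟩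
    · intro r
      rw [Algebra.algebraMap_eq_smul_one]
      exact Submodule.smul_mem _ _
        (Submodule.subset_span ⟨[], 1, h1B₃, by rw [wordOf_nil, one_mul]⟩)
    · exact fun u v _ _ h1 h2 => add_mem h1 h2
    · exact fun u v hu hv h1 h2 => hmulW _ h1 _ h2
  have hmulWs : ∀ p ∈ Submodule.span ℂ {p : H →L[ℂ] H | ∃ w, p = wordOf x w},
      ∀ q ∈ Submodule.span ℂ {p : H →L[ℂ] H | ∃ w, p = wordOf x w},
      p * q ∈ Submodule.span ℂ {p : H →L[ℂ] H | ∃ w, p = wordOf x w} := by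
    intro p hp
    refine Submodule.span_induction ?_ ?_ ?_ ?_ hp
    · rintro p' ⟨w, rfl⟩ q hq
      refine Submodule.span_induction ?_ ?_ ?_ ?_ hq
      · rintro q' ⟨w', rfl⟩
        rw [← wordOf_append]
        exact Submodule.subset_span ⟨w ++ w', rfl⟩
      · rw [mul_zero]; exact zero_mem _
      · intro u v _ _ h1 h2; rw [mul_add]; exact add_mem h1 h2
      · intro c u _ h1; rw [mul_smul_comm]; exact Submodule.smul_mem _ _ h1
    · intro q hq; rw [zero_mul]; exact zero_mem _
    · intro u v _ _ h1 h2 q hq; rw [add_mul]; exact add_mem (h1 q hq) (h2 q hq)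
    · intro c u _ h1 q hq; rw [smul_mul_assoc]; exact Submodule.smul_mem _ _ (h1 q hq)
  have hAsspan : ∀ p ∈ polyAlg (Set.range (fun c : ℂ => c • (1 : H →L[ℂ] H))) x,
      p ∈ Submodule.span ℂ {p : H →L[ℂ] H | ∃ w, p = wordOf x w} := by
    intro p hp
    refine Algebra.adjoin_induction ?_ ?_ ?_ ?_ hp
    · rintro q (⟨c, rfl⟩ | ⟨i, rfl⟩)
      · show (c • (1 : H →L[ℂ] H)) ∈ _
        have h1 : (c • (1 : H →L[ℂ] H)) = c • wordOf x [] := by rw [wordOf_nil]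
        rw [h1]
        exact Submodule.smul_mem _ _ (Submodule.subset_span ⟨[], rfl⟩)
      · exact Submodule.subset_span ⟨[i], by rw [wordOf_cons, wordOf_nil, mul_one]⟩
    · intro r
      rw [Algebra.algebraMap_eq_smul_one]
      exact Submodule.smul_mem _ _ (Submodule.subset_span ⟨[], (wordOf_nil x).symm⟩)
    · exact fun u v _ _ h1 h2 => add_mem h1 h2
    · exact fun u v hu hv h1 h2 => hmulWs _ h1 _ h2
  -- the two L² embeddings of M
  have hgadd : ∀ a ∈ Subalgebra.toSubmodule V.M.toStarSubalgebra.toSubalgebra,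
      ∀ b ∈ Subalgebra.toSubmodule V.M.toStarSubalgebra.toSubalgebra,
      L2₃.ι (jM (a + b)) = L2₃.ι (jM a) + L2₃.ι (jM b) := by
    intro a ha b hb
    rw [hjM_add a ha b hb, map_add]
  have hgsmul : ∀ (c : ℂ), ∀ a ∈ Subalgebra.toSubmodule V.M.toStarSubalgebra.toSubalgebra,
      L2₃.ι (jM (c • a)) = c • L2₃.ι (jM a) := by
    intro c a ha
    rw [hjM_smul c a ha, map_smul]
  let Msub : Submodule ℂ (H →L[ℂ] H) := Subalgebra.toSubmodule V.M.toStarSubalgebra.toSubalgebra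
  let g : Msub →ₗ[ℂ] L₃ := restrictLin Msub (fun a => L2₃.ι (jM a)) hgadd hgsmul
  let h : Msub →ₗ[ℂ] L := L2.ι.comp Msub.subtype
  have hMsub : ∀ a : Msub, (a : H →L[ℂ] H) ∈ V.M := fun a => a.2
  have hg_app : ∀ a : Msub, g a = L2₃.ι (jM ↑a) := fun a => rfl
  have hh_app : ∀ a : Msub, h a = L2.ι ↑a := fun a => rfl
  have hτjM : ∀ a ∈ V.M, V₃.τ (jM a) = V.τ a := by
    intro a ha
    have h1 := FACT a ha 1 h1B₃
    rwa [mul_one, V₃.τ_one, mul_one] at h1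
  have hIP : ∀ a b : Msub, ⟪h a, h b⟫_ℂ = ⟪g a, g b⟫_ℂ := by
    intro a b
    rw [hg_app, hg_app, hh_app, hh_app,
      L2.inner_eq _ (hMsub a) _ (hMsub b),
      L2₃.inner_eq _ (hjM_mem _ (hMsub a)) _ (hjM_mem _ (hMsub b)),
      ← hjM_star _ (hMsub a), ← hjM_mul _ (star_mem (hMsub a)) _ (hMsub b),
      hτjM _ (mul_mem (star_mem (hMsub a)) (hMsub b))]
  constructor
  · -- forward direction
    rintro ⟨ξ, hξ⟩
    have hrange_h : Set.range h = ⇑L2.ι '' (V.M : Set (H →L[ℂ] H)) := by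
      ext y
      constructor
      · rintro ⟨a, rfl⟩
        exact ⟨↑a, hMsub a, rfl⟩
      · rintro ⟨m, hm, rfl⟩
        exact ⟨⟨m, hm⟩, rfl⟩
    have hξclos : ∀ v : L, v ∈ closure (Set.range h) := by
      rw [hrange_h]
      exact fun v => L2.dense_image v
    have hstep : ∀ i : I, ∃ (zw : L₃) (a : ℕ → Msub),
        Filter.Tendsto (fun n => h (a n)) Filter.atTop (nhds (ξ i)) ∧
        Filter.Tendsto (fun n => g (a n)) Filter.atTop (nhds zw) := by
      intro i
      obtain ⟨zw, a, h1, h2⟩ := seq_transfer h g (fun a b => (hIP a b).symm) (hξclos (ξ i))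
      exact ⟨zw, a, h1, h2⟩
    choose ζ aa hha hga using hstep
    refine ⟨ζ, ?_⟩
    intro i p hp
    have KE : ∀ (w : List I), ∀ b ∈ B₃,
        ⟪ζ i, L2₃.ι (wordOf (fun i => jM (x i)) w * b)⟫_ℂ
          = ⟪ξ i, L2.ι (wordOf x w)⟫_ℂ * V₃.τ b := by
      intro w b hb
      have t2 : ∀ n : ℕ, ⟪g (aa i n), L2₃.ι (wordOf (fun i => jM (x i)) w * b)⟫_ℂ
          = ⟪h (aa i n), L2.ι (wordOf x w)⟫_ℂ * V₃.τ b := by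
        intro n
        have haM : (↑(aa i n) : H →L[ℂ] H) ∈ V.M := hMsub (aa i n)
        rw [hg_app, hh_app,
          L2₃.inner_eq _ (hjM_mem _ haM) _ (mul_mem (hword₃_mem w) (hB₃M b hb)),
          L2.inner_eq _ haM _ (hword_mem w)]
        rw [← hjM_star _ haM, ← mul_assoc, ← hjM_word w,
          ← hjM_mul _ (star_mem haM) _ (hword_mem w),
          FACT _ (mul_mem (star_mem haM) (hword_mem w)) b hb]
      have t1 : Filter.Tendsto (fun n => ⟪g (aa i n),
          L2₃.ι (wordOf (fun i => jM (x i)) w * b)⟫_ℂ) Filter.atTop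
          (nhds ⟪ζ i, L2₃.ι (wordOf (fun i => jM (x i)) w * b)⟫_ℂ) :=
        (hga i).inner tendsto_const_nhds
      have t3 : Filter.Tendsto (fun n => ⟪h (aa i n), L2.ι (wordOf x w)⟫_ℂ * V₃.τ b)
          Filter.atTop (nhds (⟪ξ i, L2.ι (wordOf x w)⟫_ℂ * V₃.τ b)) :=
        ((hha i).inner tendsto_const_nhds).mul_const _
      exact tendsto_nhds_unique (t1.congr t2) t3
    have hsp := hA₃span p hp
    refine Submodule.span_induction
      (p := fun q _ => ⟪ζ i, L2₃.ι q⟫_ℂ = ⟪C₃.e i, Der₃.D q⟫_ℂ) ?_ ?_ ?_ ?_ hsp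
    · rintro q ⟨w, b, hb, rfl⟩
      show ⟪ζ i, L2₃.ι (wordOf (fun i => jM (x i)) w * b)⟫_ℂ = _
      rw [KE w b hb, hξ i _ (hAs_words w), ← CD i w b hb]
    · simp only [map_zero, inner_zero_right]
    · intro u v _ _ h1 h2
      show ⟪ζ i, L2₃.ι (u + v)⟫_ℂ = _
      simp only [map_add, inner_add_right]
      rw [h1, h2]
    · intro c u _ h1
      show ⟪ζ i, L2₃.ι (c • u)⟫_ℂ = _
      simp only [map_smul, inner_smul_right]
      rw [h1]
  · -- converse direction
    rintro ⟨ζ, hζ⟩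
    have hNc : IsClosed ((LinearMap.range g).topologicalClosure : Set L₃) :=
      (LinearMap.range g).isClosed_topologicalClosure
    haveI : CompleteSpace ((LinearMap.range g).topologicalClosure) := hNc.completeSpace_coe
    have hNset : (((LinearMap.range g).topologicalClosure : Submodule ℂ L₃) : Set L₃)
        = closure (Set.range g) := by
      rw [Submodule.topologicalClosure_coe, LinearMap.coe_range]
    have hstep : ∀ i : I, ∃ (ξw : L) (a : ℕ → Msub),
        Filter.Tendsto (fun n => g (a n)) Filter.atTop
          (nhds (↑(Submodule.orthogonalProjection (LinearMap.range g).topologicalClosure (ζ i)))) ∧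
        Filter.Tendsto (fun n => h (a n)) Filter.atTop (nhds ξw) := by
      intro i
      have hv : (↑(Submodule.orthogonalProjection (LinearMap.range g).topologicalClosure (ζ i)) : L₃)
          ∈ closure (Set.range g) := by
        rw [← hNset]
        exact SetLike.coe_mem _
      exact seq_transfer g h hIP hv
    choose ξ aa hga hha using hstep
    refine ⟨ξ, ?_⟩
    intro i p hp
    have hproj : ∀ u ∈ (LinearMap.range g).topologicalClosure,
        ⟪(↑(Submodule.orthogonalProjection (LinearMap.range g).topologicalClosure (ζ i)) : L₃), u⟫_ℂ
          = ⟪ζ i, u⟫_ℂ := by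
      intro u hu
      have h0 := Submodule.starProjection_inner_eq_zero (K := (LinearMap.range g).topologicalClosure)
        (ζ i) u hu
      rw [inner_sub_left, sub_eq_zero] at h0
      exact h0.symm
    have KE' : ∀ m (hm : m ∈ V.M), ⟪ξ i, L2.ι m⟫_ℂ = ⟪ζ i, L2₃.ι (jM m)⟫_ℂ := by
      intro m hm
      have hmem : g ⟨m, hm⟩ ∈ (LinearMap.range g).topologicalClosure :=
        Submodule.le_topologicalClosure _ (LinearMap.mem_range_self g ⟨m, hm⟩)
      have t2 : ∀ n : ℕ, ⟪h (aa i n), L2.ι m⟫_ℂ = ⟪g (aa i n), g ⟨m, hm⟩⟫_ℂ := by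
        intro n
        exact hIP (aa i n) ⟨m, hm⟩
      have t1 : Filter.Tendsto (fun n => ⟪h (aa i n), L2.ι m⟫_ℂ) Filter.atTop
          (nhds ⟪ξ i, L2.ι m⟫_ℂ) := (hha i).inner tendsto_const_nhds
      have t3 : Filter.Tendsto (fun n => ⟪g (aa i n), g ⟨m, hm⟩⟫_ℂ) Filter.atTop
          (nhds ⟪(↑(Submodule.orthogonalProjection (LinearMap.range g).topologicalClosure (ζ i)) : L₃),
            g ⟨m, hm⟩⟫_ℂ) := (hga i).inner tendsto_const_nhds
      have h4 := tendsto_nhds_unique (t1.congr t2) t3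
      rw [h4, hproj _ hmem, hg_app]
    have hsp := hAsspan p hp
    refine Submodule.span_induction
      (p := fun q _ => q ∈ V.M ∧ ⟪ξ i, L2.ι q⟫_ℂ = ⟪Cs.e i, Ders.D q⟫_ℂ) ?_ ?_ ?_ ?_ hsp
      |>.2
    · rintro q ⟨w, rfl⟩
      show wordOf x w ∈ V.M ∧ _
      refine ⟨hword_mem w, ?_⟩
      have h1 := CD i w 1 h1B₃
      rw [mul_one, V₃.τ_one, mul_one] at h1
      rw [KE' _ (hword_mem w), hjM_word w, hζ i _ (hA₃_words w), h1]
    · exact ⟨zero_mem _, by simp only [map_zero, inner_zero_right]⟩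
    · intro u v _ _ h1 h2
      refine ⟨add_mem h1.1 h2.1, ?_⟩
      show ⟪ξ i, L2.ι (u + v)⟫_ℂ = _
      simp only [map_add, inner_add_right]
      rw [h1.2, h2.2]
    · intro c u _ h1
      refine ⟨vn_smul_mem _ c h1.1, ?_⟩
      show ⟪ξ i, L2.ι (c • u)⟫_ℂ = _
      simp only [map_smul, inner_smul_right]
      rw [h1.2]

end
end

section
/- Let s=(s_i)_{i∈I} be a B-valued semicircular family with covariance η inside (Φ(B,η), τ∘E_B) for a τ-symmetric covariance matrix η on B. Then s is a (B,η)-conjugate system for itself: ⟨s_i, p⟩_τ = ⟨e_i, ∂_η(p)⟩ for every i∈I and every p ∈ B⟨s⟩. -/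
/- Common framework: tracial von Neumann algebras, conditional expectations,
covariance matrices, the correspondence `L²(M ⊠_η M, τ)`, the η-partial
derivative, (B,η)-conjugate systems, Popa intertwining and operator-valued
cumulants, following the paper
"Conjugate systems relative to covariance matrices". -/

open scoped InnerProductSpace ComplexOrder

/-! ## Statement 9
Let `s = (s_i)_{i∈I}` be a `B`-valued semicircular family with covariance `η` inside
`(Φ(B,η), τ ∘ E_B)` (characterized by `κ_B^{(2)}(s_i ⊗ b s_j) = η_{ij}(b)` and the
vanishing of all other `B`-valued cumulants `κ_B^{(d+1)}(s_i ⊗ b_1 s_{i_1} ⊗ ⋯)`, `d ≠ 1`).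
Then `s` is a `(B,η)`-conjugate system for itself: `⟨s_i, p⟩_τ = ⟨e_i, ∂_η(p)⟩`
for every `i ∈ I` and every `p ∈ B⟨s⟩`. -/

open scoped InnerProductSpace ComplexOrder

noncomputable section

set_option linter.unusedSectionVars false
section Part0

variable {H : Type} [NormedAddCommGroup H] [InnerProductSpace ℂ H] [CompleteSpace H]

local notation "A" => (H →L[ℂ] H)

lemma sort_eq_of {α : Type*} [LinearOrder α] {S : Finset α} {l : List α}
    (h1 : l.Nodup) (h2 : l.Pairwise (· ≤ ·)) (h3 : ∀ x, x ∈ l ↔ x ∈ S) :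
    S.sort (· ≤ ·) = l :=
  List.Perm.eq_of_pairwise' (Finset.pairwise_sort _ _) h2
    (List.perm_of_nodup_nodup_toFinset_eq (Finset.sort_nodup _ _) h1
      (by ext x; simp [List.mem_toFinset, Finset.mem_sort, h3]))

lemma sort_map {α β : Type*} [LinearOrder α] [LinearOrder β] (f : α ↪o β) (S : Finset α) :
    (S.map f.toEmbedding).sort (· ≤ ·) = (S.sort (· ≤ ·)).map f := by
  apply sort_eq_of
  · exact (Finset.sort_nodup _ _).map f.injective
  · exact List.pairwise_map.2 ((Finset.pairwise_sort _ _).imp (fun h => f.monotone h))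
  · intro x
    simp [List.mem_map, Finset.mem_sort, Finset.mem_map, RelEmbedding.coe_toEmbedding]

lemma ordProd_empty (a : Fin n → A) : ordProd ∅ a = 1 := by
  simp [ordProd, Finset.sort_empty]

lemma ordProd_univ {n : ℕ} (a : Fin n → A) : ordProd Finset.univ a = (List.ofFn a).prod := by
  rw [ordProd, Fin.sort_univ, ← List.ofFn_eq_map]

lemma ordProd_singleton {n : ℕ} (v : Fin n) (a : Fin n → A) : ordProd {v} a = a v := by
  simp [ordProd, Finset.sort_singleton]

lemma ordProd_map {m n : ℕ} (f : Fin m ↪o Fin n) (S : Finset (Fin m)) (a : Fin n → A) :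
    ordProd (S.map f.toEmbedding) a = ordProd S (a ∘ f) := by
  rw [ordProd, sort_map, List.map_map, ordProd]

lemma ordProd_mem {n : ℕ} (W : VonNeumannAlgebra H) {S : Finset (Fin n)} {a : Fin n → A}
    (ha : ∀ k, a k ∈ W) : ordProd S a ∈ W := by
  refine list_prod_mem ?_
  intro x hx
  simp only [List.mem_map] at hx
  obtain ⟨j, -, rfl⟩ := hx
  exact ha j

end Part0
section Part0b

variable {H : Type} [NormedAddCommGroup H] [InnerProductSpace ℂ H] [CompleteSpace H]

local notation "A" => (H →L[ℂ] H)

lemma Ioo_zero_succ {n : ℕ} (u : Fin n) :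
    Finset.Ioo (0 : Fin (n+1)) u.succ = (Finset.Iio u).map (Fin.succOrderEmb n).toEmbedding := by
  ext j
  simp only [Finset.mem_Ioo, Finset.mem_map, Finset.mem_Iio, RelEmbedding.coe_toEmbedding,
    Fin.coe_succOrderEmb]
  constructor
  · rintro ⟨h0, hu⟩
    refine ⟨j.pred (Fin.pos_iff_ne_zero.mp h0), ?_, Fin.succ_pred _ _⟩
    have hv : (0:ℕ) < (j : ℕ) := Fin.lt_iff_val_lt_val.mp h0
    rw [Fin.lt_iff_val_lt_val] at hu ⊢
    simp only [Fin.val_succ, Fin.coe_pred] at hu ⊢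
    omega
  · rintro ⟨k, hk, rfl⟩
    exact ⟨Fin.succ_pos k, Fin.succ_lt_succ_iff.mpr hk⟩

lemma Ioi_succ_eq {n : ℕ} (u : Fin n) :
    Finset.Ioi u.succ = (Finset.Ioi u).map (Fin.succOrderEmb n).toEmbedding := by
  ext j
  simp only [Finset.mem_Ioi, Finset.mem_map, RelEmbedding.coe_toEmbedding, Fin.coe_succOrderEmb]
  constructor
  · intro h
    have h0 : j ≠ 0 := by
      intro hj; rw [hj] at h; exact absurd h (by simp [Fin.lt_iff_val_lt_val])
    refine ⟨j.pred h0, ?_, Fin.succ_pred _ _⟩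
    have hv : (j : ℕ) ≠ 0 := fun h' => h0 (Fin.ext h')
    rw [Fin.lt_iff_val_lt_val] at h ⊢
    simp only [Fin.val_succ, Fin.coe_pred] at h ⊢
    omega
  · rintro ⟨k, hk, rfl⟩
    exact Fin.succ_lt_succ_iff.mpr hk

lemma Ioi_zero_eq {n : ℕ} :
    Finset.Ioi (0 : Fin (n+1)) = (Finset.univ : Finset (Fin n)).map (Fin.succOrderEmb n).toEmbedding := by
  ext j
  simp only [Finset.mem_Ioi, Finset.mem_map, Finset.mem_univ, RelEmbedding.coe_toEmbedding,
    Fin.coe_succOrderEmb, true_and]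
  constructor
  · intro h
    exact ⟨j.pred (Fin.pos_iff_ne_zero.mp h), Fin.succ_pred _ _⟩
  · rintro ⟨k, rfl⟩
    exact Fin.succ_pos k

lemma Iio_zero_eq {n : ℕ} : Finset.Iio (0 : Fin (n+1)) = ∅ := by
  ext j; simp [Fin.not_lt_zero]

lemma ordProd_Iio {n : ℕ} (g : Fin n → A) (u : Fin n) :
    ordProd (Finset.Iio u) g = ((List.ofFn g).take u).prod := by
  induction n with
  | zero => exact u.elim0
  | succ n IH =>
    induction u using Fin.cases with
    | zero =>
      rw [Iio_zero_eq, ordProd_empty]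
      simp
    | succ w =>
      have h : Finset.Iio w.succ = insert (0 : Fin (n+1)) ((Finset.Iio w).map (Fin.succOrderEmb n).toEmbedding) := by
        ext j
        simp only [Finset.mem_Iio, Finset.mem_insert, Finset.mem_map, RelEmbedding.coe_toEmbedding,
          Fin.coe_succOrderEmb]
        constructor
        · intro hj
          rcases eq_or_ne j 0 with h0 | h0
          · exact Or.inl h0
          · refine Or.inr ⟨j.pred h0, ?_, Fin.succ_pred _ _⟩
            have hv : (j : ℕ) ≠ 0 := fun h' => h0 (Fin.ext h')
            rw [Fin.lt_iff_val_lt_val] at hj ⊢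
            simp only [Fin.val_succ, Fin.coe_pred] at hj ⊢
            omega
        · rintro (rfl | ⟨k, hk, rfl⟩)
          · exact Fin.succ_pos w
          · exact Fin.succ_lt_succ_iff.mpr hk
      have hnm : (0 : Fin (n+1)) ∉ (Finset.Iio w).map (Fin.succOrderEmb n).toEmbedding := by
        simp only [Finset.mem_map, RelEmbedding.coe_toEmbedding, Fin.coe_succOrderEmb]
        rintro ⟨k, -, hk⟩
        exact Fin.succ_ne_zero k hk
      rw [h, ordProd, Finset.sort_insert _ (fun b _ => Fin.zero_le b) hnm, List.map_cons,
        List.prod_cons, ← ordProd, ordProd_map, IH]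
      rw [List.ofFn_succ]
      simp only [Fin.val_succ, List.take_succ_cons, List.prod_cons]
      rfl

lemma ordProd_Ioi {n : ℕ} (g : Fin n → A) (u : Fin n) :
    ordProd (Finset.Ioi u) g = ((List.ofFn g).drop (u + 1)).prod := by
  induction n with
  | zero => exact u.elim0
  | succ n IH =>
    induction u using Fin.cases with
    | zero =>
      rw [Ioi_zero_eq, ordProd_map, ordProd_univ]
      rw [List.ofFn_succ]
      simp only [Fin.val_zero, List.drop_succ_cons, List.drop_zero]
      rfl
    | succ w =>
      rw [Ioi_succ_eq, ordProd_map, IH]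
      rw [List.ofFn_succ]
      simp only [Fin.val_succ, List.drop_succ_cons]
      rfl

lemma ordProd_Ioo_zero {n : ℕ} (y : Fin (n+1) → A) (u : Fin n) :
    ordProd (Finset.Ioo 0 u.succ) y = ((List.ofFn (y ∘ Fin.succ)).take u).prod := by
  rw [Ioo_zero_succ, ordProd_map, ordProd_Iio]; rfl

lemma ordProd_Ioi_succ {n : ℕ} (y : Fin (n+1) → A) (u : Fin n) :
    ordProd (Finset.Ioi u.succ) y = ((List.ofFn (y ∘ Fin.succ)).drop (u + 1)).prod := by
  rw [Ioi_succ_eq, ordProd_map, ordProd_Ioi]; rfl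

end Part0b
section Part0c

variable {H : Type} [NormedAddCommGroup H] [InnerProductSpace ℂ H] [CompleteSpace H]

local notation "A" => (H →L[ℂ] H)

lemma mem_gapSet_iff {n : ℕ} {W : Finset (Fin n)} {v j : Fin n} :
    j ∈ gapSet W v ↔ v < j ∧ ∀ m ∈ W, m ≤ v ∨ j < m := by
  simp [gapSet]

lemma gapSet_univ {n : ℕ} (v : Fin n) : gapSet Finset.univ v = ∅ := by
  ext j
  simp only [mem_gapSet_iff, Finset.notMem_empty, iff_false, not_and]
  intro hvj h
  rcases h j (Finset.mem_univ j) with h1 | h1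
  · exact absurd hvj (not_lt.2 h1)
  · exact lt_irrefl j h1

lemma gapSet_pair_left {n : ℕ} (v : Fin (n+1)) (hv : v ≠ 0) :
    gapSet {0, v} (0 : Fin (n+1)) = Finset.Ioo 0 v := by
  ext j
  simp only [mem_gapSet_iff, Finset.mem_Ioo, Finset.mem_insert, Finset.mem_singleton]
  constructor
  · rintro ⟨h0, h⟩
    refine ⟨h0, ?_⟩
    rcases h v (Or.inr rfl) with h1 | h1
    · exact absurd (Fin.le_zero_iff.mp h1) hv
    · exact h1
  · rintro ⟨h0, hjv⟩
    refine ⟨h0, ?_⟩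
    intro m hm
    rcases hm with rfl | rfl
    · exact Or.inl le_rfl
    · exact Or.inr hjv

lemma gapSet_pair_right {n : ℕ} (v : Fin (n+1)) :
    gapSet {0, v} v = Finset.Ioi v := by
  ext j
  simp only [mem_gapSet_iff, Finset.mem_Ioi, Finset.mem_insert, Finset.mem_singleton]
  constructor
  · rintro ⟨h0, -⟩; exact h0
  · intro h
    refine ⟨h, ?_⟩
    intro m hm
    rcases hm with rfl | rfl
    · exact Or.inl (Fin.zero_le v)
    · exact Or.inl le_rfl

lemma blockEnum_eq {n : ℕ} (W : Finset (Fin n)) (k : Fin W.card) :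
    blockEnum W k = (W.orderIsoOfFin rfl k : Fin n) := rfl

lemma blockEnum_mem {n : ℕ} (W : Finset (Fin n)) (k : Fin W.card) :
    blockEnum W k ∈ W := (W.orderIsoOfFin rfl k).2

lemma blockEnum_strictMono {n : ℕ} (W : Finset (Fin n)) : StrictMono (blockEnum W) := by
  intro a b h
  exact Subtype.coe_lt_coe.mpr ((W.orderIsoOfFin rfl).strictMono h)

lemma blockEnum_val_zero {n : ℕ} {W : Finset (Fin (n+1))} (h0 : 0 ∈ W)
    (k : Fin W.card) (hk : (k : ℕ) = 0) : blockEnum W k = 0 := by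
  refine le_antisymm ?_ (Fin.zero_le _)
  set k0 := (W.orderIsoOfFin rfl).symm ⟨0, h0⟩ with hk0
  have h1 : blockEnum W k0 = 0 := by
    rw [blockEnum_eq, hk0, OrderIso.apply_symm_apply]
  have hle : k ≤ k0 := by
    rw [Fin.le_def, hk]; exact Nat.zero_le _
  calc blockEnum W k ≤ blockEnum W k0 := (blockEnum_strictMono W).monotone hle
  _ = 0 := h1

lemma blockEnum_val_ne_zero {n : ℕ} {W : Finset (Fin (n+1))} (h0 : 0 ∈ W)
    (k : Fin W.card) (hk : (k : ℕ) ≠ 0) : blockEnum W k ≠ 0 := by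
  have hc : 0 < W.card := Finset.card_pos.2 ⟨0, h0⟩
  intro h
  have h1 : blockEnum W ⟨0, hc⟩ = 0 := blockEnum_val_zero h0 ⟨0, hc⟩ rfl
  have := (blockEnum_strictMono W).injective (h.trans h1.symm)
  exact hk (by simpa [Fin.ext_iff] using this)

lemma blockEnum_univ {N : ℕ} (k : Fin (Finset.univ : Finset (Fin N)).card) :
    blockEnum Finset.univ k = Fin.cast (by simp) k := by
  have h : (Finset.univ : Finset (Fin N)).card = N := by simp
  have hu : (Fin.castOrderIso h).toOrderEmbedding = (Finset.univ : Finset (Fin N)).orderEmbOfFin rfl :=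
    Finset.orderEmbOfFin_unique' rfl (fun x => Finset.mem_univ _)
  rw [blockEnum_eq, Finset.coe_orderIsoOfFin_apply, ← hu]
  rfl

lemma kappa_congr {H : Type} [NormedAddCommGroup H] [InnerProductSpace ℂ H] [CompleteSpace H]
    (κ : (n : ℕ) → (Fin n → (H →L[ℂ] H)) → (H →L[ℂ] H)) {m k : ℕ} (h : m = k)
    (f : Fin m → (H →L[ℂ] H)) (g : Fin k → (H →L[ℂ] H))
    (hfg : ∀ j : Fin k, f (Fin.cast h.symm j) = g j) : κ m f = κ k g := by
  subst h
  exact congrArg (κ m) (funext fun j => hfg j)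

lemma mapIdx_take {α β : Type*} : ∀ (l : List α) (f : ℕ → α → β) (j : ℕ),
    (l.mapIdx f).take j = (l.take j).mapIdx f
  | [], f, j => by simp
  | a :: t, f, 0 => by simp
  | a :: t, f, (j+1) => by
    simp only [List.mapIdx_cons, List.take_succ_cons, mapIdx_take]

lemma mapIdx_drop {α β : Type*} : ∀ (l : List α) (f : ℕ → α → β) (j : ℕ),
    (l.mapIdx f).drop j = (l.drop j).mapIdx (fun k x => f (k + j) x)
  | [], f, j => by simp
  | a :: t, f, 0 => by simp
  | a :: t, f, (j+1) => by
    simp only [List.mapIdx_cons, List.drop_succ_cons, mapIdx_drop]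
    simp [Nat.add_assoc]

lemma tel {M : Type*} [Monoid M] : ∀ (p : List M) (c : ℕ → M),
    (p.mapIdx fun k x => c k * x).prod * c p.length
      = c 0 * (p.mapIdx fun k x => x * c (k+1)).prod
  | [], c => by simp
  | a :: t, c => by
    have IH := tel t (fun k => c (k+1))
    simp only [List.mapIdx_cons, List.prod_cons, List.length_cons, Nat.zero_add] at IH ⊢
    rw [mul_assoc, IH]
    simp [mul_assoc]

end Part0c
section Part1

set_option maxHeartbeats 1000000

variable {H : Type} [NormedAddCommGroup H] [InnerProductSpace ℂ H] [CompleteSpace H]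
variable {I : Type}

local notation "A" => (H →L[ℂ] H)

variable (V : TracialVN H) (B : VonNeumannAlgebra H)
  (EB : CondExpOn V (B : Set (H →L[ℂ] H)))

lemma E_one : EB.E 1 = 1 := EB.fix 1 (one_mem B)

lemma E_B {b : A} (hb : b ∈ B) : EB.E b = b := EB.fix b hb

lemma E_memB {a : A} (ha : a ∈ V.M) : EB.E a ∈ B := EB.mem a ha

lemma E_mul_left {b a : A} (hb : b ∈ B) (ha : a ∈ V.M) :
    EB.E (b * a) = b * EB.E a := by
  have h := EB.bimod b hb 1 (one_mem B) a ha
  simpa using h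

lemma E_mul_right {a b : A} (ha : a ∈ V.M) (hb : b ∈ B) :
    EB.E (a * b) = EB.E a * b := by
  have h := EB.bimod 1 (one_mem B) b hb a ha
  simpa using h

lemma tau_absorb_E {x a : A}
    (hBM : (B : Set (H →L[ℂ] H)) ⊆ (V.M : Set (H →L[ℂ] H)))
    (hx : x ∈ B) (ha : a ∈ V.M) :
    V.τ (x * EB.E a) = V.τ (x * a) := by
  rw [← E_mul_left V B EB hx ha, EB.pres _ (mul_mem (hBM hx) ha)]

variable (s : I → (H →L[ℂ] H))
  (κ : (n : ℕ) → (Fin n → (H →L[ℂ] H)) → (H →L[ℂ] H))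

lemma rec0 (hκ : IsCumulantSeq V EB.E κ) {a0 : A} (ha : a0 ∈ V.M) :
    EB.E a0 = κ 1 (fun _ => a0) := by
  have h := hκ 0 (fun _ => a0) (fun _ => ha)
  have hS : (Finset.univ.powerset.filter (fun W : Finset (Fin 1) => (0 : Fin 1) ∈ W))
      = {{0}} := by decide
  rw [hS, Finset.sum_singleton] at h
  have h1 : ordProd Finset.univ (fun _ : Fin 1 => a0) = a0 := by
    rw [ordProd_univ]; simp
  rw [h1] at h
  rw [h]
  refine kappa_congr κ (by decide) _ _ ?_
  intro j
  have hbe : blockEnum ({0} : Finset (Fin 1)) (Fin.cast (by decide : (1:ℕ) = ({0} : Finset (Fin 1)).card) j) = 0 :=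
    Finset.mem_singleton.mp (blockEnum_mem _ _)
  rw [hbe]
  have hgap : gapSet ({0} : Finset (Fin 1)) (0 : Fin 1) = ∅ := by decide
  rw [hgap, ordProd_empty, E_one V B EB, mul_one]

lemma kappa_pair_arg (κ : (n : ℕ) → (Fin n → (H →L[ℂ] H)) → (H →L[ℂ] H))
    {n : ℕ} (v : Fin (n+1)) (hv : v ≠ 0) (y : Fin (n+1) → A)
    (hcard : ({0,v} : Finset (Fin (n+1))).card = 2) :
    κ ({0,v} : Finset (Fin (n+1))).card
        (fun k => y (blockEnum {0,v} k) * EB.E (ordProd (gapSet {0,v} (blockEnum {0,v} k)) y))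
      = κ 2 ![y 0 * EB.E (ordProd (Finset.Ioo 0 v) y), y v * EB.E (ordProd (Finset.Ioi v) y)] := by
  refine kappa_congr κ hcard _ _ ?_
  intro j
  have hj2 : (j:ℕ) = 0 ∨ (j:ℕ) = 1 := by omega
  rcases hj2 with hj | hj
  · have hbe : blockEnum {0,v} (Fin.cast hcard.symm j) = 0 :=
      blockEnum_val_zero (Finset.mem_insert_self _ _) _ (by simp [Fin.coe_cast, hj])
    have hj0 : j = 0 := Fin.ext (by simp [hj])
    rw [hbe, gapSet_pair_left v hv, hj0]
    rfl
  · have hne : blockEnum {0,v} (Fin.cast hcard.symm j) ≠ 0 :=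
      blockEnum_val_ne_zero (Finset.mem_insert_self _ _) _ (by simp [Fin.coe_cast, hj])
    have hbe : blockEnum {0,v} (Fin.cast hcard.symm j) = v := by
      rcases Finset.mem_insert.mp (blockEnum_mem _ _) with h | h
      · exact absurd h hne
      · exact Finset.mem_singleton.mp h
    have hj1 : j = 1 := Fin.ext (by simp [hj])
    rw [hbe, gapSet_pair_right v, hj1]
    rfl

lemma rec1 (hκ : IsCumulantSeq V EB.E κ) (x : Fin 2 → A) (hx : ∀ m, x m ∈ V.M) :
    EB.E (x 0 * x 1) = κ 1 (fun _ => x 0 * EB.E (x 1)) + κ 2 x := by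
  have h := hκ 1 x hx
  have hS : (Finset.univ.powerset.filter (fun W : Finset (Fin 2) => (0 : Fin 2) ∈ W))
      = {({0} : Finset (Fin 2)), ({0,1} : Finset (Fin 2))} := by decide
  rw [hS, Finset.sum_pair (by decide : ({0} : Finset (Fin 2)) ≠ {0,1})] at h
  have h1 : ordProd Finset.univ x = x 0 * x 1 := by
    rw [ordProd_univ]; simp [List.ofFn_succ]
  rw [h1] at h
  rw [h]
  congr 1
  · -- singleton term
    refine kappa_congr κ (by decide) _ _ ?_
    intro j
    have hbe : blockEnum ({0} : Finset (Fin 2)) (Fin.cast (by decide) j) = 0 :=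
      Finset.mem_singleton.mp (blockEnum_mem _ _)
    rw [hbe]
    have hgap : gapSet ({0} : Finset (Fin 2)) (0 : Fin 2) = {1} := by decide
    rw [hgap, ordProd_singleton]
  · -- pair term
    rw [kappa_pair_arg V B EB κ (1 : Fin 2) (by decide) x (by decide)]
    congr 1
    funext j
    have h1 : Finset.Ioo (0:Fin 2) 1 = ∅ := by decide
    have h2 : Finset.Ioi (1:Fin 2) = ∅ := by decide
    rw [h1, h2, ordProd_empty, E_one V B EB, mul_one, mul_one]
    fin_cases j <;> rfl

lemma kappa1_eval (hκ : IsCumulantSeq V EB.E κ) {x : A} (hx : x ∈ V.M) :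
    κ 1 (fun _ => x) = EB.E x := (rec0 V B EB κ hκ hx).symm

lemma E_s (hκ : IsCumulantSeq V EB.E κ)
    (hsM : ∀ i, s i ∈ V.M)
    (hsemd : ∀ (d : ℕ), d ≠ 1 → ∀ (i : I) (idx : Fin d → I) (bs : Fin d → (H →L[ℂ] H)),
      (∀ k, bs k ∈ B) →
      κ (d + 1) (Fin.cons (s i) (fun k => bs k * s (idx k))) = 0) (i : I) :
    EB.E (s i) = 0 := by
  rw [rec0 V B EB κ hκ (hsM i)]
  have h := hsemd 0 (by decide) i Fin.elim0 Fin.elim0 (fun k => k.elim0)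
  have he : (Fin.cons (s i) (fun k : Fin 0 => Fin.elim0 k * s (Fin.elim0 k)) : Fin 1 → A)
      = fun _ => s i := by
    funext j
    have : j = 0 := Fin.ext (by omega)
    rw [this]
    rfl
  rw [← he]
  exact h

lemma kappa1_zero (hκ : IsCumulantSeq V EB.E κ) : κ 1 (fun _ => (0:A)) = 0 := by
  rw [kappa1_eval V B EB κ hκ (zero_mem V.M)]
  exact map_zero _

variable (η : I → I → (H →L[ℂ] H) →ₗ[ℂ] (H →L[ℂ] H))

lemma E_sbs (hκ : IsCumulantSeq V EB.E κ) (hsM : ∀ i, s i ∈ V.M)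
    (hBM : (B : Set (H →L[ℂ] H)) ⊆ (V.M : Set (H →L[ℂ] H)))
    (hsemd : ∀ (d : ℕ), d ≠ 1 → ∀ (i : I) (idx : Fin d → I) (bs : Fin d → (H →L[ℂ] H)),
      (∀ k, bs k ∈ B) →
      κ (d + 1) (Fin.cons (s i) (fun k => bs k * s (idx k))) = 0)
    (hsem2 : ∀ (i j : I), ∀ b ∈ B, κ 2 ![s i, b * s j] = η i j b)
    (i j : I) {b : A} (hb : b ∈ B) :
    EB.E (s i * (b * s j)) = η i j b := by
  have hx : ∀ m, (![s i, b * s j] : Fin 2 → A) m ∈ V.M := by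
    intro m
    fin_cases m
    · exact hsM i
    · exact mul_mem (hBM hb) (hsM j)
  have h := rec1 V B EB κ hκ ![s i, b * s j] hx
  have h0 : (![s i, b * s j] : Fin 2 → A) 0 = s i := rfl
  have h1 : (![s i, b * s j] : Fin 2 → A) 1 = b * s j := rfl
  rw [h0, h1] at h
  rw [h, hsem2 i j b hb]
  have hE1 : EB.E (b * s j) = 0 := by
    rw [E_mul_left V B EB hb (hsM j), E_s V B EB s κ hκ hsM hsemd j, mul_zero]
  rw [hE1]
  have : (fun _ : Fin 1 => s i * (0:A)) = (fun _ : Fin 1 => (0:A)) := by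
    funext _; rw [mul_zero]
  rw [this, kappa1_zero V B EB κ hκ, zero_add]

lemma E_sbsc (hκ : IsCumulantSeq V EB.E κ) (hsM : ∀ i, s i ∈ V.M)
    (hBM : (B : Set (H →L[ℂ] H)) ⊆ (V.M : Set (H →L[ℂ] H)))
    (hsemd : ∀ (d : ℕ), d ≠ 1 → ∀ (i : I) (idx : Fin d → I) (bs : Fin d → (H →L[ℂ] H)),
      (∀ k, bs k ∈ B) →
      κ (d + 1) (Fin.cons (s i) (fun k => bs k * s (idx k))) = 0)
    (hsem2 : ∀ (i j : I), ∀ b ∈ B, κ 2 ![s i, b * s j] = η i j b)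
    (i j : I) {b c : A} (hb : b ∈ B) (hc : c ∈ B) :
    EB.E (s i * (b * (s j * c))) = η i j b * c := by
  have hassoc : s i * (b * (s j * c)) = (s i * (b * s j)) * c := by
    simp [mul_assoc]
  rw [hassoc, E_mul_right V B EB (mul_mem (hsM i) (mul_mem (hBM hb) (hsM j))) hc,
    E_sbs V B EB s κ η hκ hsM hBM hsemd hsem2 i j hb]

lemma kappa2_shape (hκ : IsCumulantSeq V EB.E κ) (hsM : ∀ i, s i ∈ V.M)
    (hBM : (B : Set (H →L[ℂ] H)) ⊆ (V.M : Set (H →L[ℂ] H)))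
    (hsemd : ∀ (d : ℕ), d ≠ 1 → ∀ (i : I) (idx : Fin d → I) (bs : Fin d → (H →L[ℂ] H)),
      (∀ k, bs k ∈ B) →
      κ (d + 1) (Fin.cons (s i) (fun k => bs k * s (idx k))) = 0)
    (hsem2 : ∀ (i j : I), ∀ b ∈ B, κ 2 ![s i, b * s j] = η i j b)
    (i j : I) {c0 b c1 : A} (hc0 : c0 ∈ B) (hb : b ∈ B) (hc1 : c1 ∈ B)
    (g : Fin 2 → A) (hg0 : g 0 = s i * c0) (hg1 : g 1 = b * s j * c1) :
    κ 2 g = η i j (c0 * b) * c1 := by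
  have hgM : ∀ m, g m ∈ V.M := by
    intro m
    have hm : (m:ℕ) = 0 ∨ (m:ℕ) = 1 := by omega
    rcases hm with hm | hm
    · have : m = 0 := Fin.ext (by simp [hm])
      rw [this, hg0]; exact mul_mem (hsM i) (hBM hc0)
    · have : m = 1 := Fin.ext (by simp [hm])
      rw [this, hg1]; exact mul_mem (mul_mem (hBM hb) (hsM j)) (hBM hc1)
  have h := rec1 V B EB κ hκ g hgM
  have hE1 : EB.E (g 1) = 0 := by
    rw [hg1, EB.bimod b hb c1 hc1 (s j) (hsM j),
      E_s V B EB s κ hκ hsM hsemd j, mul_zero, zero_mul]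
  rw [hE1] at h
  have hz : (fun _ : Fin 1 => g 0 * (0:A)) = (fun _ : Fin 1 => (0:A)) := by
    funext _; rw [mul_zero]
  rw [hz, kappa1_zero V B EB κ hκ, zero_add] at h
  rw [← h, hg0, hg1]
  have hassoc : s i * c0 * (b * s j * c1) = s i * ((c0 * b) * (s j * c1)) := by
    simp [mul_assoc]
  rw [hassoc]
  exact E_sbsc V B EB s κ η hκ hsM hBM hsemd hsem2 i j (mul_mem hc0 hb) hc1

end Part1
section Part2

set_option maxHeartbeats 1000000

variable {H : Type} [NormedAddCommGroup H] [InnerProductSpace ℂ H] [CompleteSpace H]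
variable {I : Type}

local notation "A" => (H →L[ℂ] H)

/-- The Schwinger–Dyson sum appearing in the moment formula. -/
def RsumF (E : (H →L[ℂ] H) →ₗ[ℂ] (H →L[ℂ] H)) (η : I → I → (H →L[ℂ] H) →ₗ[ℂ] (H →L[ℂ] H))
    (i : I) {n : ℕ} (y b c : Fin (n+1) → (H →L[ℂ] H)) (jj : Fin (n+1) → I) : (H →L[ℂ] H) :=
  ∑ u : Fin n, η i (jj u.succ) (c 0 * E (ordProd (Finset.Ioo 0 u.succ) y) * b u.succ) *
    (c u.succ * E (ordProd (Finset.Ioi u.succ) y))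

/-- Alternating shape of a word starting with `s i`. -/
def ShapeP (B : VonNeumannAlgebra H) (s : I → (H →L[ℂ] H)) (i : I) {n : ℕ}
    (y b c : Fin (n+1) → (H →L[ℂ] H)) (jj : Fin (n+1) → I) : Prop :=
  (∀ m, b m ∈ B) ∧ (∀ m, c m ∈ B) ∧ y 0 = s i * c 0 ∧
    ∀ m, m ≠ 0 → y m = b m * s (jj m) * c m

/-- The value of the `(n+1)`-st cumulant on a shaped tuple. -/
def L2val (η : I → I → (H →L[ℂ] H) →ₗ[ℂ] (H →L[ℂ] H)) (i : I) {n : ℕ}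
    (b c : Fin (n+1) → (H →L[ℂ] H)) (jj : Fin (n+1) → I) : (H →L[ℂ] H) :=
  if n = 1 then η i (jj 1) (c 0 * b 1) * c 1 else 0

variable (V : TracialVN H) (B : VonNeumannAlgebra H)
  (EB : CondExpOn V (B : Set (H →L[ℂ] H)))
  (s : I → (H →L[ℂ] H))
  (κ : (n : ℕ) → (Fin n → (H →L[ℂ] H)) → (H →L[ℂ] H))
  (η : I → I → (H →L[ℂ] H) →ₗ[ℂ] (H →L[ℂ] H))

lemma shape_memM (hBM : (B : Set (H →L[ℂ] H)) ⊆ (V.M : Set (H →L[ℂ] H)))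
    (hsM : ∀ i, s i ∈ V.M) {i : I} {n : ℕ} {y b c : Fin (n+1) → (H →L[ℂ] H)}
    {jj : Fin (n+1) → I} (hs : ShapeP B s i y b c jj) : ∀ m, y m ∈ V.M := by
  obtain ⟨hb, hc, hy0, hym⟩ := hs
  intro m
  rcases eq_or_ne m 0 with rfl | hm
  · rw [hy0]; exact mul_mem (hsM i) (hBM (hc 0))
  · rw [hym m hm]; exact mul_mem (mul_mem (hBM (hb m)) (hsM _)) (hBM (hc m))

lemma starStep
    (hBM : (B : Set (H →L[ℂ] H)) ⊆ (V.M : Set (H →L[ℂ] H)))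
    (hsM : ∀ i, s i ∈ V.M)
    (hκ : IsCumulantSeq V EB.E κ)
    (hsemd : ∀ (d : ℕ), d ≠ 1 → ∀ (i : I) (idx : Fin d → I) (bs : Fin d → (H →L[ℂ] H)),
      (∀ k, bs k ∈ B) →
      κ (d + 1) (Fin.cons (s i) (fun k => bs k * s (idx k))) = 0)
    (hsem2 : ∀ (i j : I), ∀ b ∈ B, κ 2 ![s i, b * s j] = η i j b)
    (n : ℕ) (h2 : 2 ≤ n)
    (IH : ∀ m : ℕ, m < n → ∀ (i : I) (y b c : Fin (m+1) → (H →L[ℂ] H)) (jj : Fin (m+1) → I),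
      ShapeP B s i y b c jj → κ (m+1) y = L2val η i b c jj)
    (i : I) (y b c : Fin (n+1) → (H →L[ℂ] H)) (jj : Fin (n+1) → I)
    (hs : ShapeP B s i y b c jj) :
    EB.E (ordProd Finset.univ y) = κ (n+1) y + RsumF EB.E η i y b c jj := by
  obtain ⟨hb, hc, hy0, hym⟩ := hs
  have hyM : ∀ m, y m ∈ V.M := shape_memM V B s hBM hsM ⟨hb, hc, hy0, hym⟩
  have hrec := hκ n y hyM
  have hcard_pair : ∀ u : Fin n, ({0, u.succ} : Finset (Fin (n+1))).card = 2 := by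
    intro u
    rw [Finset.card_insert_of_notMem (by
      simp only [Finset.mem_singleton]
      exact Ne.symm (Fin.succ_ne_zero u)), Finset.card_singleton]
  have hsub : insert Finset.univ
      (Finset.image (fun u : Fin n => ({0, u.succ} : Finset (Fin (n+1)))) Finset.univ)
      ⊆ Finset.univ.powerset.filter (fun W : Finset (Fin (n+1)) => (0 : Fin (n+1)) ∈ W) := by
    intro W hW
    simp only [Finset.mem_insert, Finset.mem_image] at hW
    simp only [Finset.mem_filter, Finset.mem_powerset]
    rcases hW with rfl | ⟨u, -, rfl⟩
    · exact ⟨le_refl _, Finset.mem_univ _⟩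
    · exact ⟨Finset.subset_univ _, Finset.mem_insert_self _ _⟩
  have hvan : ∀ W ∈ Finset.univ.powerset.filter (fun W : Finset (Fin (n+1)) => (0 : Fin (n+1)) ∈ W),
      W ∉ insert Finset.univ
        (Finset.image (fun u : Fin n => ({0, u.succ} : Finset (Fin (n+1)))) Finset.univ) →
      (κ W.card fun k => y (blockEnum W k) * EB.E (ordProd (gapSet W (blockEnum W k)) y)) = 0 := by
    intro W hWS hWnot
    simp only [Finset.mem_insert, not_or] at hWnot
    obtain ⟨hne_univ, hnotpairs⟩ := hWnot
    have h0W : (0 : Fin (n+1)) ∈ W := (Finset.mem_filter.mp hWS).2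
    have hcpos : 0 < W.card := Finset.card_pos.mpr ⟨0, h0W⟩
    obtain ⟨m, hm⟩ : ∃ m, W.card = m + 1 := ⟨W.card - 1, by omega⟩
    have hmn : m < n := by
      have hss : W ⊂ Finset.univ := Finset.ssubset_univ_iff.mpr hne_univ
      have := Finset.card_lt_card hss
      rw [Finset.card_univ, Fintype.card_fin] at this
      omega
    have hm1 : m ≠ 1 := by
      intro h1
      rw [h1] at hm
      obtain ⟨x, z, hxz, hW⟩ := Finset.card_eq_two.mp hm
      have h0 : (0 : Fin (n+1)) = x ∨ (0 : Fin (n+1)) = z := by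
        have h0' := h0W
        rw [hW] at h0'
        rcases Finset.mem_insert.mp h0' with h | h
        · exact Or.inl h
        · exact Or.inr (Finset.mem_singleton.mp h)
      rcases h0 with rfl | rfl
      · refine hnotpairs (Finset.mem_image.mpr ⟨z.pred (Ne.symm hxz), Finset.mem_univ _, ?_⟩)
        rw [Fin.succ_pred]
        exact hW.symm
      · refine hnotpairs (Finset.mem_image.mpr ⟨x.pred hxz, Finset.mem_univ _, ?_⟩)
        rw [Fin.succ_pred]
        rw [hW, Finset.pair_comm]
      
    have key := kappa_congr κ hm
      (fun k => y (blockEnum W k) * EB.E (ordProd (gapSet W (blockEnum W k)) y))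
      (fun k => y (blockEnum W (Fin.cast hm.symm k)) *
        EB.E (ordProd (gapSet W (blockEnum W (Fin.cast hm.symm k))) y))
      (fun j => rfl)
    rw [key]
    have hsh : ShapeP B s i
        (fun k => y (blockEnum W (Fin.cast hm.symm k)) *
          EB.E (ordProd (gapSet W (blockEnum W (Fin.cast hm.symm k))) y))
        (fun k => b (blockEnum W (Fin.cast hm.symm k)))
        (fun k => c (blockEnum W (Fin.cast hm.symm k)) *
          EB.E (ordProd (gapSet W (blockEnum W (Fin.cast hm.symm k))) y))
        (fun k => jj (blockEnum W (Fin.cast hm.symm k))) := by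
      refine ⟨fun k => hb _, fun k => mul_mem (hc _) (E_memB V B EB (ordProd_mem V.M hyM)), ?_, ?_⟩
      · have hφ0 : blockEnum W (Fin.cast hm.symm 0) = 0 :=
          blockEnum_val_zero h0W _ (by simp [Fin.coe_cast])
        simp only [hφ0, hy0, mul_assoc]
      · intro k hk
        have hkv : ((Fin.cast hm.symm k : Fin W.card) : ℕ) ≠ 0 := by
          rw [Fin.val_cast]; intro h'; exact hk (Fin.ext (by rw [h']; simp))
        have hφk : blockEnum W (Fin.cast hm.symm k) ≠ 0 :=
          blockEnum_val_ne_zero h0W _ hkv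
        simp only [hym _ hφk, mul_assoc]
    rw [IH m hmn i _ _ _ _ hsh]
    simp only [L2val, if_neg hm1]
  have hnotmem : Finset.univ ∉
      (Finset.image (fun u : Fin n => ({0, u.succ} : Finset (Fin (n+1)))) Finset.univ) := by
    intro hmem
    simp only [Finset.mem_image] at hmem
    obtain ⟨u, -, hu⟩ := hmem
    have hcongr := congrArg Finset.card hu
    rw [hcard_pair u, Finset.card_univ, Fintype.card_fin] at hcongr
    omega
  have hinj : ∀ u ∈ (Finset.univ : Finset (Fin n)), ∀ w ∈ (Finset.univ : Finset (Fin n)),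
      ({0, u.succ} : Finset (Fin (n+1))) = {0, w.succ} → u = w := by
    intro u _ w _ h
    have hmem : u.succ ∈ ({0, w.succ} : Finset (Fin (n+1))) := by
      rw [← h]
      exact Finset.mem_insert.mpr (Or.inr (Finset.mem_singleton_self _))
    rcases Finset.mem_insert.mp hmem with h1 | h1
    · exact absurd h1 (Fin.succ_ne_zero u)
    · exact Fin.succ_injective _ (Finset.mem_singleton.mp h1)
  rw [← Finset.sum_subset hsub hvan, Finset.sum_insert hnotmem, Finset.sum_image hinj] at hrec
  have htop : (κ (Finset.univ : Finset (Fin (n+1))).card fun k =>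
      y (blockEnum Finset.univ k) *
        EB.E (ordProd (gapSet Finset.univ (blockEnum Finset.univ k)) y)) = κ (n+1) y := by
    refine kappa_congr κ (by simp) _ _ ?_
    intro j
    have hbe : blockEnum (Finset.univ : Finset (Fin (n+1)))
        (Fin.cast (by simp : (Finset.univ : Finset (Fin (n+1))).card = n+1).symm j) = j := by
      rw [blockEnum_univ]
      ext
      rfl
    rw [hbe, gapSet_univ, ordProd_empty, E_one V B EB, mul_one]
  rw [htop] at hrec
  have hpairterm : ∀ u : Fin n,
      (κ ({0, u.succ} : Finset (Fin (n+1))).card fun k =>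
        y (blockEnum {0, u.succ} k) *
          EB.E (ordProd (gapSet {0, u.succ} (blockEnum {0, u.succ} k)) y)) =
      η i (jj u.succ) (c 0 * EB.E (ordProd (Finset.Ioo 0 u.succ) y) * b u.succ) *
        (c u.succ * EB.E (ordProd (Finset.Ioi u.succ) y)) := by
    intro u
    rw [kappa_pair_arg V B EB κ u.succ (Fin.succ_ne_zero u) y (hcard_pair u)]
    refine kappa2_shape V B EB s κ η hκ hsM hBM hsemd hsem2 i (jj u.succ)
      (mul_mem (hc 0) (E_memB V B EB (ordProd_mem V.M hyM))) (hb u.succ)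
      (mul_mem (hc u.succ) (E_memB V B EB (ordProd_mem V.M hyM))) _ ?_ ?_
    · show y 0 * EB.E (ordProd (Finset.Ioo 0 u.succ) y) = _
      rw [hy0, mul_assoc]
    · show y u.succ * EB.E (ordProd (Finset.Ioi u.succ) y) = _
      rw [hym u.succ (Fin.succ_ne_zero u)]; simp only [mul_assoc]
  rw [hrec, RsumF]
  congr 1
  exact Finset.sum_congr rfl (fun u _ => hpairterm u)

end Part2
section Part2b

set_option maxHeartbeats 1000000

variable {H : Type} [NormedAddCommGroup H] [InnerProductSpace ℂ H] [CompleteSpace H]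
variable {I : Type}

local notation "A" => (H →L[ℂ] H)

variable (s : I → (H →L[ℂ] H))

lemma telescopes (i : I) {n : ℕ} (y b c : Fin (n+1) → (H →L[ℂ] H)) (jj : Fin (n+1) → I)
    (hy0 : y 0 = s i * c 0) (hym : ∀ m, m ≠ 0 → y m = b m * s (jj m) * c m) :
    (ordProd Finset.univ y =
      ordProd Finset.univ
        (Fin.cons (s i) (fun k : Fin n => (c k.castSucc * b k.succ) * s (jj k.succ))) *
        c (Fin.last n))
    ∧ (∀ u : Fin n,
        ordProd (Finset.Ioo 0 u.succ)
          (Fin.cons (s i) (fun k : Fin n => (c k.castSucc * b k.succ) * s (jj k.succ))) *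
          c u.castSucc
        = c 0 * ordProd (Finset.Ioo 0 u.succ) y)
    ∧ (∀ u : Fin n,
        ordProd (Finset.Ioi u.succ)
          (Fin.cons (s i) (fun k : Fin n => (c k.castSucc * b k.succ) * s (jj k.succ))) *
          c (Fin.last n)
        = c u.succ * ordProd (Finset.Ioi u.succ) y) := by
  set C : ℕ → (H →L[ℂ] H) := fun k => if h : k < n+1 then c ⟨k, h⟩ else 1 with hC
  set P : List (H →L[ℂ] H) := List.ofFn (fun u : Fin n => b u.succ * s (jj u.succ)) with hP
  set y' : Fin (n+1) → (H →L[ℂ] H) :=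
    Fin.cons (s i) (fun k : Fin n => (c k.castSucc * b k.succ) * s (jj k.succ)) with hy'
  have hPlen : P.length = n := by simp [hP]
  have hC0 : C 0 = c 0 := by
    simp only [hC, dif_pos (Nat.succ_pos n)]
    congr 1
  have hClast : C n = c (Fin.last n) := by
    simp only [hC, dif_pos (Nat.lt_succ_self n)]
    rfl
  have hB1 : List.ofFn (fun u : Fin n => y u.succ) = P.mapIdx (fun k x => x * C (k+1)) := by
    refine List.ext_getElem (by simp [hPlen]) ?_
    intro k h1 h2
    rw [List.getElem_ofFn, List.getElem_mapIdx]
    simp only [hP, List.getElem_ofFn]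
    have hk : k < n := by simpa using h1
    rw [hym _ (Fin.succ_ne_zero _)]
    congr 1
    simp only [hC, dif_pos (by omega : k + 1 < n + 1)]
    congr 1
    try exact Fin.ext (by simp)
  have hB2 : List.ofFn (fun u : Fin n => y' u.succ) = P.mapIdx (fun k x => C k * x) := by
    refine List.ext_getElem (by simp [hPlen]) ?_
    intro k h1 h2
    rw [List.getElem_ofFn, List.getElem_mapIdx]
    simp only [hP, List.getElem_ofFn, hy', Fin.cons_succ]
    have hk : k < n := by simpa using h1
    rw [mul_assoc]
    congr 1
    simp only [hC, dif_pos (by omega : k < n + 1)]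
    congr 1
    try exact Fin.ext (by simp)
  refine ⟨?_, ?_, ?_⟩
  · -- T0
    rw [ordProd_univ, ordProd_univ, List.ofFn_succ, List.ofFn_succ, List.prod_cons,
      List.prod_cons, hB1, hB2, hy0]
    have h0' : y' 0 = s i := by rw [hy']; exact Fin.cons_zero _ _
    rw [h0']
    have htel := tel P C
    rw [hPlen, hClast] at htel
    conv_rhs => rw [mul_assoc, htel, hC0]
    rw [mul_assoc]
  · -- T1
    intro u
    rw [ordProd_Ioo_zero, ordProd_Ioo_zero]
    simp only [Function.comp_def]
    rw [hB1, hB2, mapIdx_take, mapIdx_take]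
    have htel := tel (P.take u.val) C
    have hlen2 : (P.take u.val).length = u.val := by
      rw [List.length_take, hPlen]
      exact Nat.min_eq_left u.isLt.le
    rw [hlen2] at htel
    have hCu : C u.val = c u.castSucc := by
      simp only [hC, dif_pos (by omega : (u:ℕ) < n+1)]
      congr 1
      try exact Fin.ext (by simp)
    rw [← hCu, htel, hC0]
  · -- T2
    intro u
    rw [ordProd_Ioi_succ, ordProd_Ioi_succ]
    simp only [Function.comp_def]
    rw [hB1, hB2]
    simp only [mapIdx_drop]
    have htel := tel (P.drop (u.val+1)) (fun k => C (k + ((u:ℕ)+1)))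
    have hlen3 : (P.drop (u.val+1)).length = n - (u.val+1) := by
      rw [List.length_drop, hPlen]
    rw [hlen3] at htel
    have hidx : n - ((u:ℕ)+1) + ((u:ℕ)+1) = n := by omega
    rw [hidx, hClast] at htel
    have hCsucc : C (0 + ((u:ℕ)+1)) = c u.succ := by
      simp only [Nat.zero_add, hC, dif_pos (by omega : (u:ℕ)+1 < n+1)]
      congr 1
      try exact Fin.ext (by simp)
    rw [hCsucc] at htel
    have hfn : (fun (k : ℕ) (x : H →L[ℂ] H) => x * C (k + 1 + ((u:ℕ)+1)))
        = (fun (k : ℕ) (x : H →L[ℂ] H) => x * C (k + ((u:ℕ)+1) + 1)) := by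
      funext k x
      congr 2
      omega
    rw [hfn] at htel
    exact htel

end Part2b
section Part2c

set_option maxHeartbeats 1000000

variable {H : Type} [NormedAddCommGroup H] [InnerProductSpace ℂ H] [CompleteSpace H]
variable {I : Type}

variable (V : TracialVN H) (B : VonNeumannAlgebra H)
  (EB : CondExpOn V (B : Set (H →L[ℂ] H)))
  (s : I → (H →L[ℂ] H))
  (κ : (n : ℕ) → (Fin n → (H →L[ℂ] H)) → (H →L[ℂ] H))
  (η : I → I → (H →L[ℂ] H) →ₗ[ℂ] (H →L[ℂ] H))

theorem mainLemma
    (hBM : (B : Set (H →L[ℂ] H)) ⊆ (V.M : Set (H →L[ℂ] H)))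
    (hsM : ∀ i, s i ∈ V.M)
    (hκ : IsCumulantSeq V EB.E κ)
    (hsemd : ∀ (d : ℕ), d ≠ 1 → ∀ (i : I) (idx : Fin d → I) (bs : Fin d → (H →L[ℂ] H)),
      (∀ k, bs k ∈ B) →
      κ (d + 1) (Fin.cons (s i) (fun k => bs k * s (idx k))) = 0)
    (hsem2 : ∀ (i j : I), ∀ b ∈ B, κ 2 ![s i, b * s j] = η i j b) :
    ∀ (n : ℕ) (i : I) (y b c : Fin (n+1) → (H →L[ℂ] H)) (jj : Fin (n+1) → I),
      ShapeP B s i y b c jj →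
      (EB.E (ordProd Finset.univ y) = RsumF EB.E η i y b c jj) ∧
      (κ (n+1) y = L2val η i b c jj) := by
  intro n
  induction n using Nat.strong_induction_on with
  | _ n IHn =>
  have IH : ∀ m : ℕ, m < n → ∀ (i : I) (y b c : Fin (m+1) → (H →L[ℂ] H)) (jj : Fin (m+1) → I),
      ShapeP B s i y b c jj → κ (m+1) y = L2val η i b c jj :=
    fun m hm i y b c jj h => (IHn m hm i y b c jj h).2
  match n with
  | 0 =>
    intro i y b c jj hs
    obtain ⟨hb, hc, hy0, hym⟩ := hs
    have hprod : ordProd Finset.univ y = y 0 := by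
      rw [ordProd_univ]
      simp [List.ofFn_succ]
    have hE0 : EB.E (y 0) = 0 := by
      rw [hy0, E_mul_right V B EB (hsM i) (hc 0),
        E_s V B EB s κ hκ hsM hsemd i, zero_mul]
    constructor
    · rw [hprod, hE0, RsumF]
      simp
    · have hyc : y = fun _ => s i * c 0 := by
        funext j
        have : j = 0 := Fin.ext (by omega)
        rw [this, hy0]
      rw [hyc, kappa1_eval V B EB κ hκ (mul_mem (hsM i) (hBM (hc 0))), ← hy0, hE0]
      simp [L2val]
  | 1 =>
    intro i y b c jj hs
    obtain ⟨hb, hc, hy0, hym⟩ := hs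
    have hk2 : κ 2 y = η i (jj 1) (c 0 * b 1) * c 1 :=
      kappa2_shape V B EB s κ η hκ hsM hBM hsemd hsem2 i (jj 1) (hc 0) (hb 1) (hc 1)
        y hy0 (hym 1 (by decide))
    have hE1 : EB.E (y 1) = 0 := by
      rw [hym 1 (by decide), EB.bimod (b 1) (hb 1) (c 1) (hc 1) (s (jj 1)) (hsM (jj 1)),
        E_s V B EB s κ hκ hsM hsemd, mul_zero, zero_mul]
    have hEprod : EB.E (y 0 * y 1) = η i (jj 1) (c 0 * b 1) * c 1 := by
      rw [rec1 V B EB κ hκ y (shape_memM V B s hBM hsM ⟨hb, hc, hy0, hym⟩), hE1]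
      have hz : (fun _ : Fin 1 => y 0 * (0 : H →L[ℂ] H)) = (fun _ : Fin 1 => (0 : H →L[ℂ] H)) := by
        funext _; rw [mul_zero]
      rw [hz, kappa1_zero V B EB κ hκ, zero_add, hk2]
    constructor
    · have hprod : ordProd Finset.univ y = y 0 * y 1 := by
        rw [ordProd_univ]
        simp [List.ofFn_succ]
      rw [hprod, hEprod, RsumF]
      rw [Fin.sum_univ_one]
      have hs1 : ((0 : Fin 1).succ : Fin 2) = 1 := rfl
      rw [hs1]
      have hIoo : Finset.Ioo (0 : Fin 2) 1 = ∅ := by decide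
      have hIoi : Finset.Ioi (1 : Fin 2) = ∅ := by decide
      rw [hIoo, hIoi, ordProd_empty, E_one V B EB, mul_one, mul_one]
    · rw [hk2, L2val, if_pos rfl]
  | (m+2) =>
    intro i y b c jj hs
    have h2 : 2 ≤ m + 2 := by omega
    -- the merged tuple y'
    set y' : Fin (m+2+1) → (H →L[ℂ] H) :=
      Fin.cons (s i) (fun k : Fin (m+2) => (c k.castSucc * b k.succ) * s (jj k.succ)) with hy'def
    obtain ⟨hb, hc, hy0, hym⟩ := hs
    set b' : Fin (m+2+1) → (H →L[ℂ] H) :=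
      fun mm => if h : mm = 0 then 1 else c ((mm.pred h).castSucc) * b mm with hb'def
    have hb'succ : ∀ u : Fin (m+2), b' u.succ = c u.castSucc * b u.succ := by
      intro u
      rw [hb'def]
      simp only [dif_neg (Fin.succ_ne_zero u), Fin.pred_succ]
    have hs' : ShapeP B s i y' b' (fun _ => 1) jj := by
      refine ⟨?_, fun _ => one_mem B, ?_, ?_⟩
      · intro mm
        rw [hb'def]
        dsimp only
        split
        · exact one_mem B
        · exact mul_mem (hc _) (hb _)
      · rw [hy'def]
        simp
      · intro mm hmm
        have hmm' : (mm.pred hmm).succ = mm := Fin.succ_pred mm hmm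
        rw [← hmm', hy'def, Fin.cons_succ, hb'succ, mul_one]
    obtain ⟨hT0, hT1, hT2⟩ := telescopes s i y b c jj hy0 hym
    have hyM : ∀ mm, y mm ∈ V.M := shape_memM V B s hBM hsM ⟨hb, hc, hy0, hym⟩
    have hy'M : ∀ mm, y' mm ∈ V.M := shape_memM V B s hBM hsM hs'
    have hstar := starStep V B EB s κ η hBM hsM hκ hsemd hsem2 (m+2) h2 IH i y b c jj
      ⟨hb, hc, hy0, hym⟩
    have hstar' := starStep V B EB s κ η hBM hsM hκ hsemd hsem2 (m+2) h2 IH i y' b'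
      (fun _ => 1) jj hs'
    have hk0 : κ (m+2+1) y' = 0 := by
      rw [hy'def]
      exact hsemd (m+2) (by omega) i (fun k => jj k.succ)
        (fun k => c k.castSucc * b k.succ) (fun k => mul_mem (hc _) (hb _))
    have hRel : RsumF EB.E η i y' b' (fun _ => 1) jj * c (Fin.last (m+2))
        = RsumF EB.E η i y b c jj := by
      rw [RsumF, RsumF, Finset.sum_mul]
      refine Finset.sum_congr rfl (fun u _ => ?_)
      have hIoo' : EB.E (ordProd (Finset.Ioo 0 u.succ) y') * c u.castSucc
          = c 0 * EB.E (ordProd (Finset.Ioo 0 u.succ) y) := by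
        rw [← E_mul_right V B EB (ordProd_mem V.M hy'M) (hc _), hT1 u,
          E_mul_left V B EB (hc 0) (ordProd_mem V.M hyM)]
      have hIoi' : EB.E (ordProd (Finset.Ioi u.succ) y') * c (Fin.last (m+2))
          = c u.succ * EB.E (ordProd (Finset.Ioi u.succ) y) := by
        rw [← E_mul_right V B EB (ordProd_mem V.M hy'M) (hc _), hT2 u,
          E_mul_left V B EB (hc _) (ordProd_mem V.M hyM)]
      rw [hb'succ u]
      calc η i (jj u.succ) (1 * EB.E (ordProd (Finset.Ioo 0 u.succ) y') * (c u.castSucc * b u.succ)) *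
            (1 * EB.E (ordProd (Finset.Ioi u.succ) y')) * c (Fin.last (m+2))
          = η i (jj u.succ) (EB.E (ordProd (Finset.Ioo 0 u.succ) y') * c u.castSucc * b u.succ) *
            (EB.E (ordProd (Finset.Ioi u.succ) y') * c (Fin.last (m+2))) := by
            rw [one_mul, one_mul, ← mul_assoc, mul_assoc _ _ (c (Fin.last (m+2)))]
      _ = η i (jj u.succ) (c 0 * EB.E (ordProd (Finset.Ioo 0 u.succ) y) * b u.succ) *
            (c u.succ * EB.E (ordProd (Finset.Ioi u.succ) y)) := by rw [hIoo', hIoi']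
    have hEy : EB.E (ordProd Finset.univ y) = RsumF EB.E η i y b c jj := by
      rw [hT0, E_mul_right V B EB (ordProd_mem V.M hy'M) (hc _), hstar', hk0, zero_add, hRel]
    have hkzero : κ (m+2+1) y = 0 := by
      rw [hEy] at hstar
      exact (right_eq_add.mp hstar)
    constructor
    · exact hEy
    · rw [hkzero, L2val, if_neg (by omega)]

end Part2c
section Part3

set_option maxHeartbeats 1000000

variable {H : Type} [NormedAddCommGroup H] [InnerProductSpace ℂ H] [CompleteSpace H]
variable {I : Type}

/-- The word `s j₁ c₁ ⋯ s jd cd` associated to a list of pairs. -/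
def wrdF (s : I → (H →L[ℂ] H)) (l : List (I × (H →L[ℂ] H))) : (H →L[ℂ] H) :=
  (l.map (fun z => s z.1 * z.2)).prod

/-- The common value of both sides of the conjugate-system identity, defined
recursively over the word. -/
def PsiF (τ : (H →L[ℂ] H) →ₗ[ℂ] ℂ) (E : (H →L[ℂ] H) →ₗ[ℂ] (H →L[ℂ] H))
    (η : I → I → (H →L[ℂ] H) →ₗ[ℂ] (H →L[ℂ] H)) (s : I → (H →L[ℂ] H)) (i : I) :
    (H →L[ℂ] H) → List (I × (H →L[ℂ] H)) → ℂ
  | _, [] => 0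
  | a, (j, cc) :: t =>
      τ (η i j (E a) * (cc * E (wrdF s t))) + PsiF τ E η s i (a * (s j * cc)) t

lemma wrdF_nil (s : I → (H →L[ℂ] H)) : wrdF s [] = 1 := rfl

lemma wrdF_cons (s : I → (H →L[ℂ] H)) (j : I) (cc : (H →L[ℂ] H)) (t : List (I × (H →L[ℂ] H))) :
    wrdF s ((j, cc) :: t) = (s j * cc) * wrdF s t := by
  simp [wrdF]

variable (V : TracialVN H) (B : VonNeumannAlgebra H)
  (EB : CondExpOn V (B : Set (H →L[ℂ] H)))
  (s : I → (H →L[ℂ] H))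
  (κ : (n : ℕ) → (Fin n → (H →L[ℂ] H)) → (H →L[ℂ] H))
  (η : I → I → (H →L[ℂ] H) →ₗ[ℂ] (H →L[ℂ] H))

lemma wrdF_memM (hBM : (B : Set (H →L[ℂ] H)) ⊆ (V.M : Set (H →L[ℂ] H)))
    (hsM : ∀ i, s i ∈ V.M) :
    ∀ (l : List (I × (H →L[ℂ] H))), (∀ z ∈ l, z.2 ∈ B) → wrdF s l ∈ V.M
  | [], _ => by rw [wrdF_nil]; exact one_mem V.M
  | (j, cc) :: t, hl => by
    rw [wrdF_cons]
    exact mul_mem (mul_mem (hsM j) (hBM (hl (j, cc) (List.mem_cons_self))))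
      (wrdF_memM hBM hsM t (fun z hz => hl z (List.mem_cons_of_mem _ hz)))

lemma wrdF_memP : ∀ (l : List (I × (H →L[ℂ] H))), (∀ z ∈ l, z.2 ∈ B) →
    wrdF s l ∈ polyAlg (B : Set (H →L[ℂ] H)) s
  | [], _ => by rw [wrdF_nil]; exact one_mem _
  | (j, cc) :: t, hl => by
    rw [wrdF_cons]
    refine mul_mem (mul_mem ?_ ?_) (wrdF_memP t (fun z hz => hl z (List.mem_cons_of_mem _ hz)))
    · exact Algebra.subset_adjoin (Set.mem_union_right _ ⟨j, rfl⟩)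
    · exact Algebra.subset_adjoin (Set.mem_union_left _ (hl (j, cc) (List.mem_cons_self)))

/-- Pure index shuffling: the Schwinger–Dyson sum in list form equals `PsiF`. -/
lemma PsiF_cons (τ : (H →L[ℂ] H) →ₗ[ℂ] ℂ) (E : (H →L[ℂ] H) →ₗ[ℂ] (H →L[ℂ] H))
    (η : I → I → (H →L[ℂ] H) →ₗ[ℂ] (H →L[ℂ] H)) (s : I → (H →L[ℂ] H)) (i j : I)
    (a cc : (H →L[ℂ] H)) (t : List (I × (H →L[ℂ] H))) :
    PsiF τ E η s i a ((j, cc) :: t) =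
      τ (η i j (E a) * (cc * E (wrdF s t))) + PsiF τ E η s i (a * (s j * cc)) t := rfl

/-- Pure index shuffling: the Schwinger–Dyson sum in list form equals `PsiF`. -/
lemma sumPsi (i : I) : ∀ (l : List (I × (H →L[ℂ] H))) (a : (H →L[ℂ] H)),
    (∑ u : Fin l.length, V.τ (η i (l.get u).1 (EB.E (a * wrdF s (l.take u))) *
      ((l.get u).2 * EB.E (wrdF s (l.drop ((u : ℕ)+1)))))) = PsiF V.τ EB.E η s i a l
  | [], a => by simp [PsiF]
  | (j, cc) :: t, a => by
    rw [PsiF_cons, ← sumPsi i t (a * (s j * cc))]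
    show (∑ u : Fin (t.length + 1),
        V.τ (η i (((j, cc) :: t).get u).1 (EB.E (a * wrdF s (((j, cc) :: t).take (u : ℕ)))) *
          ((((j, cc) :: t).get u).2 * EB.E (wrdF s (((j, cc) :: t).drop ((u : ℕ) + 1)))))) = _
    rw [Fin.sum_univ_succ]
    congr 1 <;>
    first
      | simp [wrdF_nil]
      | (refine Finset.sum_congr rfl fun u _ => ?_
         simp only [List.get_cons_succ', Fin.val_succ, List.take_succ_cons, List.drop_succ_cons,
           wrdF_cons, mul_assoc])

end Part3
section Part3b

set_option maxHeartbeats 1000000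

variable {H : Type} [NormedAddCommGroup H] [InnerProductSpace ℂ H] [CompleteSpace H]
variable {I : Type}

variable (V : TracialVN H) (B : VonNeumannAlgebra H)
  (EB : CondExpOn V (B : Set (H →L[ℂ] H)))
  (s : I → (H →L[ℂ] H))
  (κ : (n : ℕ) → (Fin n → (H →L[ℂ] H)) → (H →L[ℂ] H))
  (η : I → I → (H →L[ℂ] H) →ₗ[ℂ] (H →L[ℂ] H))

lemma momentPsi
    (hBM : (B : Set (H →L[ℂ] H)) ⊆ (V.M : Set (H →L[ℂ] H)))
    (hsM : ∀ i, s i ∈ V.M)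
    (hκ : IsCumulantSeq V EB.E κ)
    (hsemd : ∀ (d : ℕ), d ≠ 1 → ∀ (i : I) (idx : Fin d → I) (bs : Fin d → (H →L[ℂ] H)),
      (∀ k, bs k ∈ B) →
      κ (d + 1) (Fin.cons (s i) (fun k => bs k * s (idx k))) = 0)
    (hsem2 : ∀ (i j : I), ∀ b ∈ B, κ 2 ![s i, b * s j] = η i j b)
    (i : I) (l : List (I × (H →L[ℂ] H))) (hl : ∀ z ∈ l, z.2 ∈ B)
    (bb : (H →L[ℂ] H)) (hbb : bb ∈ B) :
    V.τ (s i * (bb * wrdF s l)) = PsiF V.τ EB.E η s i bb l := by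
  set y : Fin (l.length+1) → (H →L[ℂ] H) :=
    Fin.cons (s i * bb) (fun u : Fin l.length => s (l.get u).1 * (l.get u).2) with hy
  set cfn : Fin (l.length+1) → (H →L[ℂ] H) :=
    Fin.cons bb (fun u : Fin l.length => (l.get u).2) with hcfn
  set jfn : Fin (l.length+1) → I :=
    Fin.cons i (fun u : Fin l.length => (l.get u).1) with hjfn
  have hshape : ShapeP B s i y (fun _ => 1) cfn jfn := by
    refine ⟨fun _ => one_mem B, ?_, ?_, ?_⟩
    · intro m
      induction m using Fin.cases with
      | zero => simpa [hcfn] using hbb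
      | succ u =>
        have : cfn u.succ = (l.get u).2 := by rw [hcfn]; exact Fin.cons_succ _ _ u
        rw [this]
        exact hl _ (List.get_mem l u)
    · rw [hy, hcfn]
      simp
    · intro m hm
      induction m using Fin.cases with
      | zero => exact absurd rfl hm
      | succ u =>
        rw [hy, hcfn, hjfn]
        simp only [Fin.cons_succ]
        rw [one_mul]
  have hmain := (mainLemma V B EB s κ η hBM hsM hκ hsemd hsem2 l.length i y (fun _ => 1)
    cfn jfn hshape).1
  have hofn : List.ofFn (fun u : Fin l.length => y u.succ) = l.map (fun z => s z.1 * z.2) := by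
    have h1 : (fun u : Fin l.length => y u.succ)
        = ((fun z : I × (H →L[ℂ] H) => s z.1 * z.2) ∘ l.get) := by
      funext u
      rw [hy]
      exact Fin.cons_succ _ _ u
    rw [h1, ← List.map_ofFn, List.ofFn_get]
  have hprod : ordProd Finset.univ y = (s i * bb) * wrdF s l := by
    rw [ordProd_univ, List.ofFn_succ, List.prod_cons]
    congr 1
    rw [hofn]
    rfl
  have hwM : wrdF s l ∈ V.M := wrdF_memM V B s hBM hsM l hl
  have hordM : ordProd Finset.univ y ∈ V.M :=
    ordProd_mem V.M (shape_memM V B s hBM hsM hshape)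
  have hτ : V.τ (s i * (bb * wrdF s l)) = V.τ (EB.E (ordProd Finset.univ y)) := by
    rw [← mul_assoc, ← hprod, EB.pres _ hordM]
  rw [hτ, hmain, RsumF, map_sum, ← sumPsi V B EB s η i l bb]
  refine Finset.sum_congr rfl (fun u _ => ?_)
  have hj : jfn u.succ = (l.get u).1 := by rw [hjfn]; exact Fin.cons_succ _ _ u
  have hc0 : cfn 0 = bb := by rw [hcfn]; exact Fin.cons_zero _ _
  have hcu : cfn u.succ = (l.get u).2 := by rw [hcfn]; exact Fin.cons_succ _ _ u
  have hIoo : ordProd (Finset.Ioo 0 u.succ) y = wrdF s (l.take u) := by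
    rw [ordProd_Ioo_zero]
    have : (y ∘ Fin.succ) = fun u : Fin l.length => y u.succ := rfl
    rw [this, hofn, ← List.map_take]
    rfl
  have hIoi : ordProd (Finset.Ioi u.succ) y = wrdF s (l.drop ((u:ℕ)+1)) := by
    rw [ordProd_Ioi_succ]
    have : (y ∘ Fin.succ) = fun u : Fin l.length => y u.succ := rfl
    rw [this, hofn, ← List.map_drop]
    rfl
  rw [hj, hc0, hcu, hIoo, hIoi, mul_one,
    ← E_mul_left V B EB hbb (wrdF_memM V B s hBM hsM _ (fun z hz => hl z (List.mem_of_mem_take hz)))]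

end Part3b
section Part3c

set_option maxHeartbeats 1000000

variable {H : Type} [NormedAddCommGroup H] [InnerProductSpace ℂ H] [CompleteSpace H]
variable {I : Type}

variable (V : TracialVN H) (B : VonNeumannAlgebra H)
  (EB : CondExpOn V (B : Set (H →L[ℂ] H)))
  (s : I → (H →L[ℂ] H))
  (η : I → I → (H →L[ℂ] H) →ₗ[ℂ] (H →L[ℂ] H))

lemma DPsi {K : Type} [NormedAddCommGroup K] [InnerProductSpace ℂ K] [CompleteSpace K]
    (C : EtaCorr V I EB.E η K) (Der : EtaDer C (B : Set (H →L[ℂ] H)) s)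
    (hBM : (B : Set (H →L[ℂ] H)) ⊆ (V.M : Set (H →L[ℂ] H)))
    (hsM : ∀ i, s i ∈ V.M)
    (hη : ∀ i j, ∀ b ∈ (B : Set (H →L[ℂ] H)), η i j b ∈ (B : Set (H →L[ℂ] H)))
    (i : I) :
    ∀ (l : List (I × (H →L[ℂ] H))), (∀ z ∈ l, z.2 ∈ B) → ∀ (a : (H →L[ℂ] H)), a ∈ V.M →
      ⟪C.e i, C.kl a (Der.D (wrdF s l))⟫_ℂ = PsiF V.τ EB.E η s i a l
  | [], _, a, _ => by
    rw [wrdF_nil, Der.D_coef 1 (one_mem B), map_zero, inner_zero_right]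
    rfl
  | (j, cc) :: t, hl, a, ha => by
    have hcc : cc ∈ B := hl (j, cc) (List.mem_cons_self)
    have hlt : ∀ z ∈ t, z.2 ∈ B := fun z hz => hl z (List.mem_cons_of_mem _ hz)
    have hsP : s j ∈ polyAlg (B : Set (H →L[ℂ] H)) s :=
      Algebra.subset_adjoin (Set.mem_union_right _ ⟨j, rfl⟩)
    have hcP : cc ∈ polyAlg (B : Set (H →L[ℂ] H)) s :=
      Algebra.subset_adjoin (Set.mem_union_left _ hcc)
    have htP : wrdF s t ∈ polyAlg (B : Set (H →L[ℂ] H)) s := wrdF_memP B s t hlt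
    have htM : wrdF s t ∈ V.M := wrdF_memM V B s hBM hsM t hlt
    have hD1 : Der.D (s j * cc) = C.kr cc (C.e j) := by
      rw [Der.D_leibniz (s j) hsP cc hcP, Der.D_x, Der.D_coef cc hcc, map_zero, add_zero]
    have hD : Der.D (wrdF s ((j, cc) :: t)) =
        C.kr (cc * wrdF s t) (C.e j) + C.kl (s j * cc) (Der.D (wrdF s t)) := by
      rw [wrdF_cons, Der.D_leibniz _ (mul_mem hsP hcP) _ htP, hD1]
      congr 1
      have := LinearMap.congr_fun (C.kr_mul cc (wrdF s t)) (C.e j)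
      exact this.symm
    rw [hD, map_add, inner_add_right]
    have hterm1 : ⟪C.e i, C.kl a (C.kr (cc * wrdF s t) (C.e j))⟫_ℂ =
        V.τ (η i j (EB.E a) * (cc * EB.E (wrdF s t))) := by
      have hei : C.kl 1 (C.kr 1 (C.e i)) = C.e i := by
        rw [C.kl_one, C.kr_one]
        rfl
      rw [← hei]
      rw [C.inner_gen i j 1 (one_mem V.M) 1 (one_mem V.M) a ha (cc * wrdF s t)
        (mul_mem (hBM hcc) htM)]
      rw [star_one, one_mul, one_mul]
      have hxB : η i j (EB.E a) ∈ B := hη i j _ (E_memB V B EB ha)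
      rw [← mul_assoc, ← mul_assoc, tau_absorb_E V B EB hBM (mul_mem hxB hcc) htM]
    have hterm2 : ⟪C.e i, C.kl a (C.kl (s j * cc) (Der.D (wrdF s t)))⟫_ℂ =
        PsiF V.τ EB.E η s i (a * (s j * cc)) t := by
      have hklm := LinearMap.congr_fun (C.kl_mul a (s j * cc)) (Der.D (wrdF s t))
      have : C.kl a (C.kl (s j * cc) (Der.D (wrdF s t))) =
          C.kl (a * (s j * cc)) (Der.D (wrdF s t)) := hklm.symm
      rw [this]
      exact DPsi C Der hBM hsM hη i t hlt (a * (s j * cc))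
        (mul_mem ha (mul_mem (hsM j) (hBM hcc)))
    rw [hterm1, hterm2, PsiF_cons]

lemma normalForm : ∀ (L : List (H →L[ℂ] H)),
    (∀ x ∈ L, x ∈ (B : Set (H →L[ℂ] H)) ∪ Set.range s) →
    ∃ (bb : (H →L[ℂ] H)) (l : List (I × (H →L[ℂ] H))), bb ∈ B ∧ (∀ z ∈ l, z.2 ∈ B) ∧
      L.prod = bb * wrdF s l
  | [], _ => ⟨1, [], one_mem B, by simp, by simp [wrdF_nil]⟩
  | x :: t, hL => by
    obtain ⟨bb, l, hbb, hl, hprod⟩ := normalForm t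
      (fun z hz => hL z (List.mem_cons_of_mem _ hz))
    rcases hL x (List.mem_cons_self) with hx | ⟨j, rfl⟩
    · exact ⟨x * bb, l, mul_mem hx hbb, hl, by
        rw [List.prod_cons, hprod, mul_assoc]⟩
    · refine ⟨1, (j, bb) :: l, one_mem B, ?_, ?_⟩
      · intro z hz
        rcases List.mem_cons.mp hz with rfl | hz'
        · exact hbb
        · exact hl z hz'
      · rw [List.prod_cons, hprod, wrdF_cons, one_mul, mul_assoc]

end Part3c

theorem statement9
    {H : Type} [NormedAddCommGroup H] [InnerProductSpace ℂ H] [CompleteSpace H]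
    {I : Type} [Countable I]
    -- `(Φ(B,η), τ∘E_B)`, the von Neumann algebra generated by `B` and the family `s` :
    (V : TracialVN H) (B : VonNeumannAlgebra H)
    (hBM : (B : Set (H →L[ℂ] H)) ⊆ (V.M : Set (H →L[ℂ] H)))
    (s : I → (H →L[ℂ] H)) (hsM : ∀ i, s i ∈ V.M) (hssa : ∀ i, IsSelfAdjoint (s i))
    (hgen : (V.M : Set (H →L[ℂ] H)) = vnGen ((B : Set (H →L[ℂ] H)) ∪ Set.range s))
    (EB : CondExpOn V (B : Set (H →L[ℂ] H)))
    (η : I → I → (H →L[ℂ] H) →ₗ[ℂ] (H →L[ℂ] H))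
    (hcov : IsCovariance V (B : Set (H →L[ℂ] H)) EB η)
    -- the `B`-valued cumulants with respect to `E_B` :
    (κ : (n : ℕ) → (Fin n → (H →L[ℂ] H)) → (H →L[ℂ] H))
    (hκ : IsCumulantSeq V EB.E κ)
    -- `s` is a `B`-valued semicircular family with covariance `η` :
    (hsem2 : ∀ (i j : I), ∀ b ∈ B, κ 2 ![s i, b * s j] = η i j b)
    (hsemd : ∀ (d : ℕ), d ≠ 1 → ∀ (i : I) (idx : Fin d → I) (bs : Fin d → (H →L[ℂ] H)),
      (∀ k, bs k ∈ B) →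
      κ (d + 1) (Fin.cons (s i) (fun k => bs k * s (idx k))) = 0)
    {L K : Type} [NormedAddCommGroup L] [InnerProductSpace ℂ L] [CompleteSpace L]
    [NormedAddCommGroup K] [InnerProductSpace ℂ K] [CompleteSpace K]
    (L2 : L2Rep V L) (C : EtaCorr V I EB.E η K)
    (Der : EtaDer C (B : Set (H →L[ℂ] H)) s) :
    IsConjugateSystem L2 C Der (fun i => L2.ι (s i)) := by
  intro i p hp
  have hη := hcov.1
  have hp' : p ∈ Submodule.span ℂ
      ((Submonoid.closure ((B : Set (H →L[ℂ] H)) ∪ Set.range s) : Submonoid (H →L[ℂ] H)) :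
        Set (H →L[ℂ] H)) := by
    have h1 : p ∈ Subalgebra.toSubmodule
        (Algebra.adjoin ℂ ((B : Set (H →L[ℂ] H)) ∪ Set.range s)) :=
      (Subalgebra.mem_toSubmodule _).mpr hp
    rw [Algebra.adjoin_eq_span] at h1
    exact h1
  clear hp
  induction hp' using Submodule.span_induction with
  | mem x hx =>
    obtain ⟨Lw, hLw, hLprod⟩ := Submonoid.exists_list_of_mem_closure hx
    obtain ⟨bb, l, hbb, hl, hnf⟩ := normalForm B s Lw hLw
    rw [← hLprod, hnf]
    have hwP : wrdF s l ∈ polyAlg (B : Set (H →L[ℂ] H)) s := wrdF_memP B s l hl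
    have hwM : wrdF s l ∈ V.M := wrdF_memM V B s hBM hsM l hl
    have hbbP : bb ∈ polyAlg (B : Set (H →L[ℂ] H)) s :=
      Algebra.subset_adjoin (Set.mem_union_left _ hbb)
    have hmemM : bb * wrdF s l ∈ V.M := mul_mem (hBM hbb) hwM
    rw [L2.inner_eq (s i) (hsM i) _ hmemM, (hssa i).star_eq,
      momentPsi V B EB s κ η hBM hsM hκ hsemd hsem2 i l hl bb hbb,
      Der.D_leibniz bb hbbP _ hwP, Der.D_coef bb hbb, map_zero, zero_add]
    exact (DPsi V B EB s η C Der hBM hsM hη i l hl bb (hBM hbb)).symm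
  | zero =>
    rw [map_zero, map_zero, inner_zero_right, inner_zero_right]
  | add x z hx hz ihx ihz =>
    rw [map_add, map_add, inner_add_right, inner_add_right, ihx, ihz]
  | smul a x hx ih =>
    rw [map_smul, map_smul, inner_smul_right, inner_smul_right, ih]


end
end

section
/- Let (M,τ) be a tracial von Neumann algebra, let B ≤ N ≤ M be von Neumann subalgebras with N ⊀_M B (no corner of N embeds into B inside M in the sense of Popa), and let η be a covariance matrix on B extended as η∘E_B. Then L²(M⊠_η M,τ) has no nonzero N-central vectors, i.e., if ζ ∈ L²(M⊠_η M,τ) satisfies yζ = ζy for all y∈N, then ζ = 0. -/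
/- Common framework: tracial von Neumann algebras, conditional expectations,
covariance matrices, the correspondence `L²(M ⊠_η M, τ)`, the η-partial
derivative, (B,η)-conjugate systems, Popa intertwining and operator-valued
cumulants, following the paper
"Conjugate systems relative to covariance matrices". -/

open scoped InnerProductSpace ComplexOrder

/-! ## Statement 15
Let `(M,τ)` be a tracial von Neumann algebra, `B ≤ N ≤ M` von Neumann subalgebras
with `N ⊀_M B`, and `η` a covariance matrix on `B` extended as `η ∘ E_B`.  Then
`L²(M ⊠_η M, τ)` has no nonzero `N`-central vectors. -/

open scoped InnerProductSpace ComplexOrder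

noncomputable section


/-! Auxiliary lemmas -/

section AuxLemmas

variable {H : Type} [NormedAddCommGroup H] [InnerProductSpace ℂ H] [CompleteSpace H]

lemma aux_norm_le_one (u : H →L[ℂ] H) (h : star u * u = 1) : ‖u‖ ≤ 1 := by
  refine ContinuousLinearMap.opNorm_le_bound u zero_le_one fun v => ?_
  rw [one_mul]
  have h2 : ⟪u v, u v⟫_ℂ = ⟪v, v⟫_ℂ := by
    have h5 := ContinuousLinearMap.adjoint_inner_left u v (u v)
    rw [← ContinuousLinearMap.star_eq_adjoint] at h5
    have h3 : (star u) (u v) = v := by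
      have h6 : (star u * u) v = (1 : H →L[ℂ] H) v := by rw [h]
      simpa [ContinuousLinearMap.mul_apply] using h6
    rw [h3] at h5
    exact h5.symm
  have h4 : ‖u v‖ = ‖v‖ := by
    rw [norm_eq_sqrt_re_inner (𝕜 := ℂ), norm_eq_sqrt_re_inner (𝕜 := ℂ) v, h2]
  rw [h4]

lemma aux_isClosed_centralizer (s : Set (H →L[ℂ] H)) :
    IsClosed (Set.centralizer s) := by
  have h : Set.centralizer s = ⋂ m ∈ s, {c : H →L[ℂ] H | m * c = c * m} := by
    ext c; simp [Set.mem_centralizer_iff]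
  rw [h]
  exact isClosed_biInter fun m _ =>
    isClosed_eq (continuous_mul_left m) (continuous_mul_right m)


variable (V : TracialVN H)


lemma aux_isClosed_M : IsClosed ((V.M : Set (H →L[ℂ] H))) := by
  rw [← V.M.centralizer_centralizer]
  exact aux_isClosed_centralizer _

lemma aux_tau_re_nonneg (a : H →L[ℂ] H) (ha : a ∈ V.M) : 0 ≤ (V.τ (star a * a)).re := by
  have h := V.τ_pos a ha
  rw [Complex.le_def] at h
  simpa using h.1

lemma aux_tauNorm_nonneg (a : H →L[ℂ] H) : 0 ≤ V.τNorm a := Real.sqrt_nonneg _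

lemma aux_tauNorm_sq (a : H →L[ℂ] H) (ha : a ∈ V.M) :
    V.τNorm a ^ 2 = (V.τ (star a * a)).re :=
  Real.sq_sqrt (aux_tau_re_nonneg V a ha)

lemma aux_tauNorm_star (a : H →L[ℂ] H) (ha : a ∈ V.M) :
    V.τNorm (star a) = V.τNorm a := by
  unfold TracialVN.τNorm
  rw [star_star, V.τ_trace a ha (star a) (star_mem ha)]

lemma aux_tau_cs (x y : H →L[ℂ] H) (hx : x ∈ V.M) (hy : y ∈ V.M) :
    ‖V.τ (star x * y)‖ ≤ V.τNorm x * V.τNorm y := by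
  letI core : PreInnerProductSpace.Core ℂ V.M.toStarSubalgebra :=
    { inner := fun a b => V.τ (star (a : H →L[ℂ] H) * (b : H →L[ℂ] H))
      conj_inner_symm := fun a b => by
        have h := V.τ_star (star (b : H →L[ℂ] H) * (a : H →L[ℂ] H))
          (mul_mem (star_mem b.2) a.2)
        simp only [star_mul, star_star] at h
        exact h.symm ▸ rfl
      re_inner_nonneg := fun a => aux_tau_re_nonneg V _ a.2
      add_left := fun a b c => by
        show V.τ (star ((a : H →L[ℂ] H) + b) * c) = _
        rw [star_add, add_mul, map_add]
      smul_left := fun a b r => by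
        show V.τ (star (r • (a : H →L[ℂ] H)) * b) = _
        rw [star_smul, smul_mul_assoc, map_smul]
        simp [smul_eq_mul] }
  have h := @InnerProductSpace.Core.inner_mul_inner_self_le ℂ
    V.M.toStarSubalgebra _ _ _ core ⟨x, hx⟩ ⟨y, hy⟩
  have hxy : (core.inner ⟨y, hy⟩ ⟨x, hx⟩ : ℂ) = starRingEnd ℂ (core.inner ⟨x, hx⟩ ⟨y, hy⟩) :=
    (core.conj_inner_symm _ _).symm
  have hnorm : ‖(core.inner ⟨y, hy⟩ ⟨x, hx⟩ : ℂ)‖ = ‖(core.inner ⟨x, hx⟩ ⟨y, hy⟩ : ℂ)‖ := by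
    rw [hxy, RCLike.norm_conj]
  have h2 : ‖V.τ (star x * y)‖ ^ 2 ≤ (V.τNorm x * V.τNorm y) ^ 2 := by
    have hx2 := aux_tauNorm_sq V x hx
    have hy2 := aux_tauNorm_sq V y hy
    have : ‖V.τ (star x * y)‖ * ‖V.τ (star x * y)‖ ≤
        (V.τ (star x * x)).re * (V.τ (star y * y)).re := by
      exact (congrArg (fun t => ‖V.τ (star x * y)‖ * t) hnorm).symm.le.trans h
    calc ‖V.τ (star x * y)‖ ^ 2 = ‖V.τ (star x * y)‖ * ‖V.τ (star x * y)‖ := sq _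
    _ ≤ (V.τ (star x * x)).re * (V.τ (star y * y)).re := this
    _ = (V.τNorm x * V.τNorm y) ^ 2 := by rw [mul_pow, hx2, hy2]
  have h3 := Real.sqrt_le_sqrt h2
  rwa [Real.sqrt_sq (norm_nonneg _),
    Real.sqrt_sq (mul_nonneg (aux_tauNorm_nonneg V x) (aux_tauNorm_nonneg V y))] at h3

lemma aux_exists_sqrt (X : H →L[ℂ] H) (hX : X ∈ V.M) :
    ∃ w ∈ V.M, star w * w = algebraMap ℝ (H →L[ℂ] H) (‖X‖ ^ 2) - star X * X := by
  set P : H →L[ℂ] H := algebraMap ℝ (H →L[ℂ] H) (‖X‖ ^ 2) - star X * X with hPdef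
  have hP : (0 : H →L[ℂ] H) ≤ P := sub_nonneg.mpr CStarAlgebra.star_mul_le_algebraMap_norm_sq
  have hPsa : IsSelfAdjoint P := .of_nonneg hP
  haveI hPsn : IsStarNormal P := hPsa.isStarNormal
  have hPM : P ∈ V.M := by
    refine sub_mem ?_ (mul_mem (star_mem hX) hX)
    rw [IsScalarTower.algebraMap_apply ℝ ℂ (H →L[ℂ] H)]
    exact V.M.toStarSubalgebra.algebraMap_mem _
  have hspec : ∀ z ∈ spectrum ℂ P, z = (z.re : ℂ) ∧ 0 ≤ z.re := by
    intro z hz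
    have hzre : z = (z.re : ℂ) := SpectrumRestricts.real_iff.mp hPsa.spectrumRestricts z hz
    refine ⟨hzre, ?_⟩
    have hzr : z.re ∈ spectrum ℝ P := by
      apply spectrum.of_algebraMap_mem ℂ
      rw [Complex.coe_algebraMap]
      exact hzre ▸ hz
    exact spectrum_nonneg_of_nonneg hP hzr
  set f : ℂ → ℂ := fun z => ((Real.sqrt z.re : ℝ) : ℂ) with hfdef
  have hfc : Continuous f := by
    exact Complex.continuous_ofReal.comp (Real.continuous_sqrt.comp Complex.continuous_re)
  have hf : ContinuousOn f (spectrum ℂ P) := hfc.continuousOn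
  refine ⟨cfc f P, ?_, ?_⟩
  · have hmem : cfc f P ∈ StarAlgebra.elemental ℂ P := by
      rw [cfc_apply f P hPsn hf, cfcHom_eq_of_isStarNormal]
      simp only [StarAlgHom.comp_apply, StarSubalgebra.coe_subtype]
      exact SetLike.coe_mem _
    have hle : StarAlgebra.elemental ℂ P ≤ V.M.toStarSubalgebra :=
      StarAlgebra.elemental.le_of_mem (aux_isClosed_M V) hPM
    exact hle hmem
  · have hstar : star (cfc f P) = cfc f P := by
      rw [← cfc_star]
      exact cfc_congr fun z hz => by simp [hfdef, Complex.conj_ofReal]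
    rw [hstar, ← cfc_mul f f P hf hf]
    have h2 : cfc (fun z => f z * f z) P = cfc (id : ℂ → ℂ) P := by
      apply cfc_congr
      intro z hz
      obtain ⟨h1, h2⟩ := hspec z hz
      simp only [hfdef, id_eq]
      rw [← Complex.ofReal_mul, Real.mul_self_sqrt h2]
      exact h1.symm
    rw [h2, cfc_id ℂ P]

lemma aux_tauNorm_mul (X y : H →L[ℂ] H) (hX : X ∈ V.M) (hy : y ∈ V.M) :
    V.τNorm (X * y) ≤ ‖X‖ * V.τNorm y := by
  obtain ⟨w, hwM, hww⟩ := aux_exists_sqrt V X hX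
  have hXX : star X * X = algebraMap ℝ (H →L[ℂ] H) (‖X‖ ^ 2) - star w * w := by
    rw [hww, sub_sub_cancel]
  have key : (V.τ (star (X * y) * (X * y))).re ≤ ‖X‖ ^ 2 * (V.τ (star y * y)).re := by
    have h2 : star (X * y) * (X * y) = star y * (star X * X) * y := by
      rw [star_mul]; noncomm_ring
    have h3 : star y * (algebraMap ℝ (H →L[ℂ] H) (‖X‖ ^ 2)) * y
        = (‖X‖ ^ 2 : ℝ) • (star y * y) := by
      rw [Algebra.algebraMap_eq_smul_one]
      simp [smul_mul_assoc, mul_smul_comm]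
    have h4 : star y * (star w * w) * y = star (w * y) * (w * y) := by
      rw [star_mul]; noncomm_ring
    have h5 : V.τ (star (X * y) * (X * y))
        = (‖X‖ ^ 2 : ℂ) * V.τ (star y * y) - V.τ (star (w * y) * (w * y)) := by
      rw [h2, hXX, mul_sub, sub_mul, map_sub, h3, h4]
      rw [← algebraMap_smul ℂ (‖X‖ ^ 2 : ℝ) (star y * y), map_smul]
      norm_num [Algebra.algebraMap_self, smul_eq_mul]
    have h6 : 0 ≤ (V.τ (star (w * y) * (w * y))).re :=
      aux_tau_re_nonneg V _ (mul_mem hwM hy)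
    rw [h5]
    rw [Complex.sub_re]
    have h7 : ((‖X‖ ^ 2 : ℂ) * V.τ (star y * y)).re = ‖X‖ ^ 2 * (V.τ (star y * y)).re := by
      norm_cast
      exact Complex.re_ofReal_mul _ _
    rw [h7]
    linarith
  have h8 := Real.sqrt_le_sqrt key
  unfold TracialVN.τNorm
  refine le_trans h8 ?_
  rw [Real.sqrt_mul (sq_nonneg _), Real.sqrt_sq (norm_nonneg X)]


section Corr

variable {I : Type} {E : (H →L[ℂ] H) →ₗ[ℂ] (H →L[ℂ] H)}
  {η : I → I → (H →L[ℂ] H) →ₗ[ℂ] (H →L[ℂ] H)} {K : Type} [NormedAddCommGroup K]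
  [InnerProductSpace ℂ K] [CompleteSpace K] (C : EtaCorr V I E η K)

/-- The spanning set of generators. -/
private def genSet : Set K :=
  {ζ : K | ∃ (i : I) (a b : H →L[ℂ] H), a ∈ V.M ∧ b ∈ V.M ∧ ζ = C.kl a (C.kr b (C.e i))}

private lemma aux_cont_kl (u : H →L[ℂ] H) (hu : u ∈ V.M) :
    Continuous fun ψ : K => C.kl u ψ :=
  AddMonoidHomClass.continuous_of_bound (C.kl u) ‖u‖ (C.kl_bound u hu)

private lemma aux_cont_kr (u : H →L[ℂ] H) (hu : u ∈ V.M) :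
    Continuous fun ψ : K => C.kr u ψ :=
  AddMonoidHomClass.continuous_of_bound (C.kr u) ‖u‖ (C.kr_bound u hu)

private lemma aux_adj_kl (u x y : H →L[ℂ] H) (hu : u ∈ V.M) (hx : x ∈ V.M) (hy : y ∈ V.M)
    (i : I) (ζ : K) :
    ⟪C.kl x (C.kr y (C.e i)), C.kl u ζ⟫_ℂ = ⟪C.kl (star u * x) (C.kr y (C.e i)), ζ⟫_ℂ := by
  have hfun : (fun ψ : K => ⟪C.kl x (C.kr y (C.e i)), C.kl u ψ⟫_ℂ)
      = fun ψ : K => ⟪C.kl (star u * x) (C.kr y (C.e i)), ψ⟫_ℂ := by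
    refine Continuous.ext_on C.dense_span
      (continuous_const.inner (aux_cont_kl V C u hu)) (continuous_const.inner continuous_id)
      ?_
    intro v hv
    rw [SetLike.mem_coe] at hv
    induction hv using Submodule.span_induction with
    | mem v hvm =>
      obtain ⟨j, c, d, hc, hd, rfl⟩ := hvm
      have hklm : C.kl u (C.kl c (C.kr d (C.e j))) = C.kl (u * c) (C.kr d (C.e j)) := by
        rw [C.kl_mul, LinearMap.comp_apply]
      simp only [hklm]
      rw [C.inner_gen i j x hx y hy (u * c) (mul_mem hu hc) d hd,
        C.inner_gen i j (star u * x) (mul_mem (star_mem hu) hx) y hy c hc d hd]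
      congr 2
      simp [star_mul, star_star, mul_assoc]
    | zero => simp
    | add v w _ _ hv hw => simp only [map_add, inner_add_right, hv, hw]
    | smul r v _ hv => simp only [map_smul, inner_smul_right, hv]
  exact congrFun hfun ζ

private lemma aux_adj_kr (u x y : H →L[ℂ] H) (hu : u ∈ V.M) (hx : x ∈ V.M) (hy : y ∈ V.M)
    (i : I)
    (hmid : ∀ (j : I) (c : H →L[ℂ] H), c ∈ V.M → η i j (E (star x * c)) ∈ V.M)
    (ζ : K) :
    ⟪C.kl x (C.kr y (C.e i)), C.kr u ζ⟫_ℂ = ⟪C.kl x (C.kr (y * star u) (C.e i)), ζ⟫_ℂ := by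
  have hfun : (fun ψ : K => ⟪C.kl x (C.kr y (C.e i)), C.kr u ψ⟫_ℂ)
      = fun ψ : K => ⟪C.kl x (C.kr (y * star u) (C.e i)), ψ⟫_ℂ := by
    refine Continuous.ext_on C.dense_span
      (continuous_const.inner (aux_cont_kr V C u hu)) (continuous_const.inner continuous_id)
      ?_
    intro v hv
    rw [SetLike.mem_coe] at hv
    induction hv using Submodule.span_induction with
    | mem v hvm =>
      obtain ⟨j, c, d, hc, hd, rfl⟩ := hvm
      have hkrm : C.kr u (C.kl c (C.kr d (C.e j))) = C.kl c (C.kr (d * u) (C.e j)) := by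
        rw [C.kr_mul, LinearMap.comp_apply]; simp only [C.kl_kr]
      simp only [hkrm]
      rw [C.inner_gen i j x hx y hy c hc (d * u) (mul_mem hd hu),
        C.inner_gen i j x hx (y * star u) (mul_mem hy (star_mem hu)) c hc d hd]
      have hW : η i j (E (star x * c)) ∈ V.M := hmid j c hc
      have hq : star y * η i j (E (star x * c)) * d ∈ V.M :=
        mul_mem (mul_mem (star_mem hy) hW) hd
      calc V.τ (star y * η i j (E (star x * c)) * (d * u))
          = V.τ ((star y * η i j (E (star x * c)) * d) * u) := by congr 1; try noncomm_ring
        _ = V.τ (u * (star y * η i j (E (star x * c)) * d)) := V.τ_trace _ hq u hu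
        _ = V.τ (star (y * star u) * η i j (E (star x * c)) * d) := by
            rw [star_mul, star_star]
            noncomm_ring
    | zero => simp
    | add v w _ _ hv hw => simp only [map_add, inner_add_right, hv, hw]
    | smul r v _ hv => simp only [map_smul, inner_smul_right, hv]
  exact congrFun hfun ζ

end Corr

end AuxLemmas

theorem statement15
    {H : Type} [NormedAddCommGroup H] [InnerProductSpace ℂ H] [CompleteSpace H]
    {I : Type} [Countable I]
    (V : TracialVN H) (B N : VonNeumannAlgebra H)
    (hBN : (B : Set (H →L[ℂ] H)) ⊆ (N : Set (H →L[ℂ] H)))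
    (hNM : (N : Set (H →L[ℂ] H)) ⊆ (V.M : Set (H →L[ℂ] H)))
    (EB : CondExpOn V (B : Set (H →L[ℂ] H)))
    (η : I → I → (H →L[ℂ] H) →ₗ[ℂ] (H →L[ℂ] H))
    (hcov : IsCovariance V (B : Set (H →L[ℂ] H)) EB η)
    {K : Type} [NormedAddCommGroup K] [InnerProductSpace ℂ K] [CompleteSpace K]
    (C : EtaCorr V I EB.E η K)
    -- `N ⊀_M B` :
    (hnot : ¬ PopaEmbeds V (V.M : Set (H →L[ℂ] H)) (N : Set (H →L[ℂ] H)) EB.E) :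
    ∀ ζ : K, (∀ y ∈ N, C.kl y ζ = C.kr y ζ) → ζ = 0 := by
  obtain ⟨ιT, l, hl, u, hu, hconv⟩ := not_not.mp hnot
  haveI : l.NeBot := hl
  intro ζ hζ
  have hBM : ∀ {x : H →L[ℂ] H}, x ∈ (B : Set (H →L[ℂ] H)) → x ∈ V.M := fun hx => hNM (hBN hx)
  have huN : ∀ k, u k ∈ N := fun k => (hu k).1
  have huM : ∀ k, u k ∈ V.M := fun k => hNM (huN k)
  have husM : ∀ k, star (u k) ∈ V.M := fun k => star_mem (huM k)
  have hut : ∀ k, ‖u k‖ ≤ 1 := fun k => aux_norm_le_one _ (hu k).2.1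
  have hust : ∀ k, ‖star (u k)‖ ≤ 1 := fun k =>
    aux_norm_le_one _ (by rw [star_star]; exact (hu k).2.2)
  have hmid : ∀ (i' : I) (x : H →L[ℂ] H), x ∈ V.M → ∀ (j : I) (c : H →L[ℂ] H), c ∈ V.M →
      η i' j (EB.E (star x * c)) ∈ V.M := fun i' x hx j c hc =>
    hBM (hcov.1 i' j _ (EB.mem _ (mul_mem (star_mem hx) hc)))
  have hgen : ∀ (i : I) (a b : H →L[ℂ] H), a ∈ V.M → b ∈ V.M →
      ⟪C.kl a (C.kr b (C.e i)), ζ⟫_ℂ = 0 := by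
    intro i a b ha hb
    have hstep : ∀ k, ⟪C.kl a (C.kr b (C.e i)), ζ⟫_ℂ =
        ⟪C.kl (star (u k) * a) (C.kr (b * u k) (C.e i)), ζ⟫_ℂ := by
      intro k
      have hcent : C.kr (star (u k)) ζ = C.kl (star (u k)) ζ :=
        (hζ (star (u k)) (star_mem (huN k))).symm
      have h1 : C.kl (u k) (C.kr (star (u k)) ζ) = ζ := by
        rw [hcent, ← LinearMap.comp_apply, ← C.kl_mul, (hu k).2.2, C.kl_one, LinearMap.id_apply]
      calc ⟪C.kl a (C.kr b (C.e i)), ζ⟫_ℂ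
          = ⟪C.kl a (C.kr b (C.e i)), C.kl (u k) (C.kr (star (u k)) ζ)⟫_ℂ := by rw [h1]
        _ = ⟪C.kl (star (u k) * a) (C.kr b (C.e i)), C.kr (star (u k)) ζ⟫_ℂ :=
            aux_adj_kl V C (u k) a b (huM k) ha hb i _
        _ = ⟪C.kl (star (u k) * a) (C.kr (b * star (star (u k))) (C.e i)), ζ⟫_ℂ :=
            aux_adj_kr V C (star (u k)) (star (u k) * a) b (husM k)
              (mul_mem (husM k) ha) hb i
              (hmid i (star (u k) * a) (mul_mem (husM k) ha)) ζ
        _ = ⟪C.kl (star (u k) * a) (C.kr (b * u k) (C.e i)), ζ⟫_ℂ := by rw [star_star]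
    have hv0 : ∀ v ∈ Submodule.span ℂ
        {ξ : K | ∃ (j : I) (c d : H →L[ℂ] H), c ∈ V.M ∧ d ∈ V.M ∧ ξ = C.kl c (C.kr d (C.e j))},
        Filter.Tendsto
          (fun k => ⟪C.kl (star (u k) * a) (C.kr (b * u k) (C.e i)), v⟫_ℂ) l (nhds 0) := by
      intro v hv
      induction hv using Submodule.span_induction with
      | zero => simpa using tendsto_const_nhds
      | add v w _ _ hv hw => simp only [inner_add_right]; simpa using hv.add hw
      | smul r v _ hv => simp only [inner_smul_right]; simpa using hv.const_mul r
      | mem v hvm =>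
        obtain ⟨j, c, d, hc, hd, rfl⟩ := hvm
        set z : ιT → (H →L[ℂ] H) := fun k => EB.E (star a * u k * c) with hzdef
        have hzB : ∀ k, z k ∈ (B : Set (H →L[ℂ] H)) := fun k =>
          EB.mem _ (mul_mem (mul_mem (star_mem ha) (huM k)) hc)
        have hzM : ∀ k, z k ∈ V.M := fun k => hBM (hzB k)
        set X : H →L[ℂ] H := η j j 1 with hXdef
        have h1B : (1 : H →L[ℂ] H) ∈ (B : Set (H →L[ℂ] H)) := by
          rw [SetLike.mem_coe]; exact one_mem B
        have hXB : X ∈ (B : Set (H →L[ℂ] H)) := hcov.1 j j 1 h1B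
        have hXM : X ∈ V.M := hBM hXB
        set m : ιT → (H →L[ℂ] H) := fun k => d * (star (u k) * star b) with hmdef
        have hmM : ∀ k, m k ∈ V.M := fun k =>
          mul_mem hd (mul_mem (husM k) (star_mem hb))
        have hmnorm : ∀ k, ‖m k‖ ≤ ‖d‖ * ‖b‖ := by
          intro k
          refine le_trans (norm_mul_le _ _) ?_
          have h2 : ‖star (u k) * star b‖ ≤ ‖b‖ := by
            refine le_trans (norm_mul_le _ _) ?_
            have hbs : ‖star b‖ = ‖b‖ := norm_star b
            nlinarith [hust k, norm_nonneg b, norm_nonneg (star (u k)), norm_nonneg (star b)]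
          exact mul_le_mul_of_nonneg_left h2 (norm_nonneg d)
        have hWB : ∀ k, η i j (z k) ∈ (B : Set (H →L[ℂ] H)) := fun k => hcov.1 i j _ (hzB k)
        have hWM : ∀ k, η i j (z k) ∈ V.M := fun k => hBM (hWB k)
        -- the τ chain
        have hA : ∀ k, ⟪C.kl (star (u k) * a) (C.kr (b * u k) (C.e i)),
            C.kl c (C.kr d (C.e j))⟫_ℂ = V.τ (z k * η j i (EB.E (m k))) := by
          intro k
          rw [C.inner_gen i j (star (u k) * a) (mul_mem (husM k) ha) (b * u k)
            (mul_mem hb (huM k)) c hc d hd]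
          have hz' : EB.E (star (star (u k) * a) * c) = z k := by
            rw [hzdef]
            congr 1
            simp only [star_mul, star_star, mul_assoc]
          rw [hz']
          have e1 : star (b * u k) * η i j (z k) * d
              = (star (u k) * star b) * (η i j (z k) * d) := by
            rw [star_mul]; noncomm_ring
          rw [e1]
          have e2 : V.τ ((star (u k) * star b) * (η i j (z k) * d))
              = V.τ ((η i j (z k) * d) * (star (u k) * star b)) :=
            V.τ_trace _ (mul_mem (husM k) (star_mem hb)) _
              (mul_mem (hWM k) hd)
          rw [e2]
          have e3 : (η i j (z k) * d) * (star (u k) * star b) = η i j (z k) * m k := by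
            rw [hmdef]; noncomm_ring
          rw [e3]
          have e4 : EB.E (η i j (z k) * m k) = η i j (z k) * EB.E (m k) := by
            have := EB.bimod (η i j (z k)) (hWB k) 1 h1B (m k) (hmM k)
            simpa using this
          have e5 : V.τ (η i j (z k) * m k) = V.τ (η i j (z k) * EB.E (m k)) := by
            rw [← EB.pres _ (mul_mem (hWM k) (hmM k)), e4]
          rw [e5]
          exact hcov.2.1 i j (z k) (hzB k) (EB.E (m k)) (EB.mem _ (hmM k))
        have hB : ∀ k, V.τ (z k * η j i (EB.E (m k)))
            = ⟪C.kr (star (z k)) (C.e j), C.kl (m k) (C.e i)⟫_ℂ := by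
          intro k
          have := C.inner_gen j i 1 (one_mem V.M) (star (z k)) (star_mem (hzM k))
            (m k) (hmM k) 1 (one_mem V.M)
          rw [C.kl_one, C.kr_one] at this
          simp only [LinearMap.id_apply] at this
          rw [this]
          simp [star_star]
        have hD : ∀ k, ‖C.kl (m k) (C.e i)‖ ≤ (‖d‖ * ‖b‖) * ‖C.e i‖ := by
          intro k
          refine le_trans (C.kl_bound _ (hmM k) _) ?_
          exact mul_le_mul_of_nonneg_right (hmnorm k) (norm_nonneg _)
        have hE : ∀ k, ‖C.kr (star (z k)) (C.e j)‖ ≤ Real.sqrt ‖X‖ * V.τNorm (z k) := by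
          intro k
          have hsq : ‖C.kr (star (z k)) (C.e j)‖ ^ 2
              = (V.τ (star (star (z k)) * (X * star (z k)))).re := by
            rw [← @inner_self_eq_norm_sq ℂ]
            have := C.inner_gen j j 1 (one_mem V.M) (star (z k)) (star_mem (hzM k))
              1 (one_mem V.M) (star (z k)) (star_mem (hzM k))
            rw [C.kl_one] at this
            simp only [LinearMap.id_apply] at this
            rw [this]
            have hE1 : EB.E (star (1 : H →L[ℂ] H) * 1) = 1 := by
              simpa using EB.fix 1 h1B
            rw [hE1]
            have hassoc : star (star (z k)) * η j j 1 * star (z k)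
                = star (star (z k)) * (X * star (z k)) := by
              rw [hXdef]; noncomm_ring
            rw [hassoc]
            rfl
          have hle : (V.τ (star (star (z k)) * (X * star (z k)))).re
              ≤ ‖X‖ * V.τNorm (z k) ^ 2 := by
            have hcs := aux_tau_cs V (star (z k)) (X * star (z k))
              (star_mem (hzM k)) (mul_mem hXM (star_mem (hzM k)))
            have hre : (V.τ (star (star (z k)) * (X * star (z k)))).re
                ≤ ‖V.τ (star (star (z k)) * (X * star (z k)))‖ := by
              exact Complex.re_le_norm _
            have hmul := aux_tauNorm_mul V X (star (z k)) hXM (star_mem (hzM k))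
            rw [aux_tauNorm_star V (z k) (hzM k)] at hmul
            have hs := aux_tauNorm_star V (z k) (hzM k)
            calc (V.τ (star (star (z k)) * (X * star (z k)))).re
                ≤ V.τNorm (star (z k)) * V.τNorm (X * star (z k)) := le_trans hre hcs
              _ ≤ V.τNorm (z k) * (‖X‖ * V.τNorm (z k)) := by
                  rw [hs]
                  exact mul_le_mul_of_nonneg_left hmul (aux_tauNorm_nonneg V _)
              _ = ‖X‖ * V.τNorm (z k) ^ 2 := by ring
          have h2 : ‖C.kr (star (z k)) (C.e j)‖ ^ 2 ≤ ‖X‖ * V.τNorm (z k) ^ 2 := by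
            rw [hsq]; exact hle
          have h3 := Real.sqrt_le_sqrt h2
          rw [Real.sqrt_sq (norm_nonneg _)] at h3
          refine le_trans h3 ?_
          rw [Real.sqrt_mul (norm_nonneg X), Real.sqrt_sq (aux_tauNorm_nonneg V _)]
        have htend : Filter.Tendsto (fun k => V.τNorm (z k)) l (nhds 0) := by
          have := hconv (star a) (star_mem ha) c hc
          exact this
        rw [tendsto_zero_iff_norm_tendsto_zero]
        refine squeeze_zero (fun k => norm_nonneg _)
          (fun k => ?_)
          (g := fun k => (Real.sqrt ‖X‖ * V.τNorm (z k)) * ((‖d‖ * ‖b‖) * ‖C.e i‖)) ?_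
        · rw [hA k, hB k]
          refine le_trans (norm_inner_le_norm _ _) ?_
          exact mul_le_mul (hE k) (hD k) (norm_nonneg _)
            (mul_nonneg (Real.sqrt_nonneg _) (aux_tauNorm_nonneg V _))
        · simpa using ((htend.const_mul (Real.sqrt ‖X‖)).mul_const ((‖d‖ * ‖b‖) * ‖C.e i‖))
    -- ε-argument
    by_contra hT0
    have hTpos : 0 < ‖⟪C.kl a (C.kr b (C.e i)), ζ⟫_ℂ‖ := norm_pos_iff.mpr hT0
    set T := ‖⟪C.kl a (C.kr b (C.e i)), ζ⟫_ℂ‖ with hTdef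
    set Cg : ℝ := ‖a‖ * (‖b‖ * ‖C.e i‖) with hCgdef
    have hCg0 : 0 ≤ Cg := by positivity
    have hCgk : ∀ k, ‖C.kl (star (u k) * a) (C.kr (b * u k) (C.e i))‖ ≤ Cg := by
      intro k
      refine le_trans (C.kl_bound _ (mul_mem (husM k) ha) _) ?_
      have h1 : ‖star (u k) * a‖ ≤ ‖a‖ := by
        refine le_trans (norm_mul_le _ _) ?_
        nlinarith [hust k, norm_nonneg a, norm_nonneg (star (u k))]
      have h2 : ‖C.kr (b * u k) (C.e i)‖ ≤ ‖b‖ * ‖C.e i‖ := by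
        refine le_trans (C.kr_bound _ (mul_mem hb (huM k)) _) ?_
        have h3 : ‖b * u k‖ ≤ ‖b‖ := by
          refine le_trans (norm_mul_le _ _) ?_
          nlinarith [hut k, norm_nonneg b, norm_nonneg (u k)]
        exact mul_le_mul_of_nonneg_right h3 (norm_nonneg _)
      exact mul_le_mul h1 h2 (norm_nonneg _) (norm_nonneg a)
    set ε : ℝ := T / (2 * (1 + Cg)) with hεdef
    have hε : 0 < ε := by positivity
    obtain ⟨ζ₀, hζ₀S, hζ₀d⟩ : ∃ ζ₀ ∈ (Submodule.span ℂ
        {ξ : K | ∃ (j : I) (c d : H →L[ℂ] H), c ∈ V.M ∧ d ∈ V.M ∧ ξ = C.kl c (C.kr d (C.e j))} :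
        Submodule ℂ K), dist ζ ζ₀ < ε := by
      have hd := C.dense_span ζ
      rw [Metric.mem_closure_iff] at hd
      obtain ⟨ζ₀, hζ₀, hdist⟩ := hd ε hε
      exact ⟨ζ₀, SetLike.mem_coe.mp hζ₀, hdist⟩
    have hub : ∀ k, T ≤ ‖⟪C.kl (star (u k) * a) (C.kr (b * u k) (C.e i)), ζ₀⟫_ℂ‖ + Cg * ε := by
      intro k
      rw [hTdef, hstep k]
      have hdec : ⟪C.kl (star (u k) * a) (C.kr (b * u k) (C.e i)), ζ⟫_ℂ
          = ⟪C.kl (star (u k) * a) (C.kr (b * u k) (C.e i)), ζ₀⟫_ℂ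
            + ⟪C.kl (star (u k) * a) (C.kr (b * u k) (C.e i)), ζ - ζ₀⟫_ℂ := by
        rw [← inner_add_right]
        congr 1
        abel
      rw [hdec]
      refine le_trans (norm_add_le _ _) (add_le_add_right ?_ _)
      refine le_trans (norm_inner_le_norm _ _) ?_
      have : ‖ζ - ζ₀‖ ≤ ε := by
        rw [← dist_eq_norm]
        exact le_of_lt hζ₀d
      exact mul_le_mul (hCgk k) this (norm_nonneg _) hCg0
    have hev : ∀ᶠ k in l,
        ‖⟪C.kl (star (u k) * a) (C.kr (b * u k) (C.e i)), ζ₀⟫_ℂ‖ < ε := by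
      have h0 := (hv0 ζ₀ hζ₀S).norm
      simp only [norm_zero] at h0
      exact h0.eventually_lt_const hε
    obtain ⟨k, hk⟩ := hev.exists
    have hfin : T < T := by
      have h1Cg : (0:ℝ) < 1 + Cg := by linarith
      calc T ≤ ‖⟪C.kl (star (u k) * a) (C.kr (b * u k) (C.e i)), ζ₀⟫_ℂ‖ + Cg * ε := hub k
        _ < ε + Cg * ε := by linarith
        _ = (1 + Cg) * ε := by ring
        _ = T / 2 := by
            rw [hεdef]
            field_simp
        _ < T := by linarith
    exact lt_irrefl _ hfin
  -- conclude ζ = 0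
  have hspan0 : ∀ v ∈ Submodule.span ℂ
      {ξ : K | ∃ (i : I) (a b : H →L[ℂ] H), a ∈ V.M ∧ b ∈ V.M ∧ ξ = C.kl a (C.kr b (C.e i))},
      ⟪v, ζ⟫_ℂ = 0 := by
    intro v hv
    induction hv using Submodule.span_induction with
    | mem v hvm =>
      obtain ⟨i, a, b, ha, hb, rfl⟩ := hvm
      exact hgen i a b ha hb
    | zero => simp
    | add v w _ _ hv hw => simp [inner_add_left, hv, hw]
    | smul r v _ hv => simp [inner_smul_left, hv]
  have hall : (fun v : K => ⟪v, ζ⟫_ℂ) = fun _ => (0 : ℂ) :=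
    Continuous.ext_on C.dense_span (continuous_id.inner continuous_const) continuous_const
      (fun v hv => hspan0 v (SetLike.mem_coe.mp hv))
  have hzz : ⟪ζ, ζ⟫_ℂ = 0 := congrFun hall ζ
  exact inner_self_eq_zero.mp hzz

end
end
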